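/- arXiv:1703.01143 — 13 statements merged into one kernel-verified Lean document; each statement's English description precedes it below -/
import Mathlib

section
/- For two sequences A and B over a linearly ordered alphabet, if C is a common weakly increasing subsequence of A and B, then the sequence Ĉ obtained by replacing each symbol a of C with w(a) consecutive copies of a (for a positive weight function w) is a common weakly increasing subsequence of Â and B̂, where Â and B̂ are obtained from A and B by the same replacement. Consequently WLCWIS(A,B) ≤ LCWIS(Â,B̂). -/
open List

/-- `C` is a common weakly increasing subsequence of `A` and `B`. -/
def CWIS {σ : Type*} [LinearOrder σ] (A B C : List σ) : Prop :=
  C.Chain' (· ≤ ·) ∧ C.Sublist A ∧ C.Sublist B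

/-- Length of a longest common weakly increasing subsequence. -/
noncomputable def LCWIS {σ : Type*} [LinearOrder σ] (A B : List σ) : ℕ :=
  sSup {n | ∃ C : List σ, CWIS A B C ∧ C.length = n}

/-- Maximum total weight of a common weakly increasing subsequence. -/
noncomputable def WLCWIS {σ : Type*} [LinearOrder σ] (w : σ → ℕ) (A B : List σ) : ℕ :=
  sSup {n | ∃ C : List σ, CWIS A B C ∧ (C.map w).sum = n}

/-- Blow-up: replace each symbol `a` by `w a` consecutive copies of `a`. -/
def blow {σ : Type*} (w : σ → ℕ) (X : List σ) : List σ :=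
  X.flatMap fun a => List.replicate (w a) a

lemma blow_sublist {σ : Type*} (w : σ → ℕ) {C A : List σ} (h : C.Sublist A) :
    (blow w C).Sublist (blow w A) := by
  induction h with
  | slnil => simp [blow]
  | cons a h ih =>
      simpa [blow] using ih.trans (sublist_append_right _ _)
  | cons_cons a h ih =>
      simpa [blow] using (Sublist.refl (List.replicate (w a) a)).append ih

lemma blow_chain' {σ : Type*} [LinearOrder σ] (w : σ → ℕ) {C : List σ}
    (h : C.Chain' (· ≤ ·)) : (blow w C).Chain' (· ≤ ·) := by
  simp only [Chain', isChain_iff_pairwise] at h ⊢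
  unfold blow
  rw [flatMap_def, pairwise_flatten]
  refine ⟨?_, ?_⟩
  · intro l hl
    simp only [mem_map] at hl
    obtain ⟨a, _, rfl⟩ := hl
    exact pairwise_replicate.2 (Or.inr le_rfl)
  · rw [pairwise_map]
    refine h.imp_of_mem ?_
    intro a b _ _ hab x hx y hy
    rw [eq_of_mem_replicate hx, eq_of_mem_replicate hy]
    exact hab

lemma blow_length {σ : Type*} (w : σ → ℕ) (C : List σ) :
    (blow w C).length = (C.map w).sum := by
  simp [blow, length_flatMap, Function.comp_def]

theorem wlcwis_le_lcwis_blow {σ : Type*} [LinearOrder σ] (w : σ → ℕ) (hw : ∀ a, 0 < w a)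
    (A B : List σ) :
    (∀ C : List σ, CWIS A B C → CWIS (blow w A) (blow w B) (blow w C)) ∧
    WLCWIS w A B ≤ LCWIS (blow w A) (blow w B) := by
  have main : ∀ C : List σ, CWIS A B C → CWIS (blow w A) (blow w B) (blow w C) := by
    rintro C ⟨h1, h2, h3⟩
    exact ⟨blow_chain' w h1, blow_sublist w h2, blow_sublist w h3⟩
  refine ⟨main, csSup_le_csSup ?_ ?_ ?_⟩
  · refine ⟨(blow w A).length, ?_⟩
    rintro n ⟨C, hC, rfl⟩
    exact hC.2.1.length_le
  · exact ⟨0, [], ⟨List.isChain_nil, nil_sublist _, nil_sublist _⟩, rfl⟩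
  · rintro n ⟨C, hC, rfl⟩
    exact ⟨blow w C, main C hC, blow_length w C⟩
end

section
/- For two sequences A and B over a linearly ordered alphabet with positive weight function w, LCWIS(Â,B̂) ≤ WLCWIS(A,B), where Â and B̂ are obtained by replacing every symbol a by w(a) consecutive copies of a. Hence WLCWIS(A,B) = LCWIS(Â,B̂). -/
open List

/- ## Auxiliary lemmas -/

lemma ceil_div_le {m w c : ℕ} (h : 0 < w) (h2 : m ≤ w * c) : (m + w - 1) / w ≤ c := by
  have h3 := Nat.div_add_mod (m + w - 1) w
  have h4 : (m + w - 1) % w < w := Nat.mod_lt _ h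
  by_contra hc
  push_neg at hc
  have h5 : w * (c + 1) ≤ w * ((m + w - 1) / w) := Nat.mul_le_mul_left _ hc
  have h6 : w * (c + 1) = w * c + w := by ring
  omega

lemma le_ceil_div_mul {m w : ℕ} (h : 0 < w) : m ≤ ((m + w - 1) / w) * w := by
  have h3 := Nat.div_add_mod (m + w - 1) w
  have h4 : (m + w - 1) % w < w := Nat.mod_lt _ h
  rw [mul_comm]
  omega

lemma flatMap_sublist_flatMap {σ : Type*} (f : σ → List σ) {A B : List σ} (h : A <+ B) :
    A.flatMap f <+ B.flatMap f := by
  induction h with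
  | slnil => simp
  | @cons l₁ l₂ a h ih => simpa [flatMap_cons] using ih.trans (sublist_append_right (f a) _)
  | @cons_cons l₁ l₂ a h ih => simpa [flatMap_cons] using Sublist.append_left ih (f a)

lemma chain'_flatMap_replicate {σ : Type*} [LinearOrder σ] (n : σ → ℕ) {D : List σ}
    (h : D.Chain' (· ≤ ·)) :
    (D.flatMap fun a => List.replicate (n a) a).Chain' (· ≤ ·) := by
  simp only [List.Chain', List.isChain_iff_pairwise] at h ⊢
  rw [List.pairwise_flatMap]
  constructor
  · intro a _
    exact List.pairwise_replicate.2 (Or.inr le_rfl)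
  · refine h.imp ?_
    intro a b hab x hx y hy
    rw [List.eq_of_mem_replicate hx, List.eq_of_mem_replicate hy]
    exact hab

lemma count_blow {σ : Type*} [LinearOrder σ] (w : σ → ℕ) (b : σ) (A : List σ) :
    count b (blow w A) = w b * count b A := by
  induction A with
  | nil => simp [blow]
  | cons a A ih =>
    rw [blow, flatMap_cons] at *
    rw [count_append, count_replicate, count_cons, ih]
    by_cases hab : a = b
    · subst hab; simp [Nat.mul_add]; ring
    · simp [hab]

/-- key contraction lemma: a sublist of a blow-up is contained in the blow-up of a
sublist whose elements it represents. -/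
lemma exists_contract {σ : Type*} [LinearOrder σ] (w : σ → ℕ) (A : List σ) :
    ∀ D : List σ, D <+ blow w A → ∃ C, C <+ A ∧ C <+ D ∧ D <+ blow w C := by
  induction A with
  | nil =>
    intro D hD
    simp only [blow, flatMap_nil, sublist_nil] at hD
    exact ⟨[], by simp [hD, blow]⟩
  | cons a A ih =>
    intro D hD
    rw [blow, flatMap_cons] at hD
    obtain ⟨D₁, D₂, rfl, h1, h2⟩ := sublist_append_iff.1 hD
    obtain ⟨m, hm, rfl⟩ := sublist_replicate_iff.1 h1
    obtain ⟨C, hCA, hCD, hDC⟩ := ih D₂ h2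
    cases m with
    | zero =>
      exact ⟨C, hCA.cons a, by simpa using hCD, by simpa using hDC⟩
    | succ m =>
      refine ⟨a :: C, hCA.cons₂ a, ?_, ?_⟩
      · simp only [replicate_succ, cons_append]
        exact (hCD.trans (sublist_append_right _ _)).cons₂ a
      · rw [blow, flatMap_cons]
        exact Sublist.append h1 hDC

lemma sublist_of_count_le {σ : Type*} [LinearOrder σ] {X Y : List σ}
    (hX : X.Chain' (· ≤ ·)) (hY : Y.Chain' (· ≤ ·))
    (h : ∀ b, count b X ≤ count b Y) : X <+ Y := by
  haveI : IsAntisymm σ (· ≤ ·) := ⟨fun _ _ => le_antisymm⟩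
  refine List.sublist_of_subperm_of_pairwise (r := (· ≤ ·)) ?_ ?_ ?_
  · exact List.subperm_ext_iff.2 fun x _ => h x
  · exact List.isChain_iff_pairwise.1 hX
  · exact List.isChain_iff_pairwise.1 hY

lemma sum_map_ite_le {σ : Type*} [DecidableEq σ] (b : σ) (t : σ → ℕ) :
    ∀ {l : List σ}, l.Nodup →
      (l.map fun a => if a = b then t a else 0).sum ≤ t b := by
  intro l
  induction l with
  | nil => simp
  | cons a l ih =>
    intro hl
    rw [nodup_cons] at hl
    rw [map_cons, sum_cons]
    by_cases hab : a = b
    · subst hab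
      have : (l.map fun x => if x = a then t x else 0).sum = 0 := by
        apply List.sum_eq_zero
        intro x hx
        rw [mem_map] at hx
        obtain ⟨c, hc, rfl⟩ := hx
        have : c ≠ a := fun hca => hl.1 (hca ▸ hc)
        simp [this]
      simp [this]
    · simpa [hab] using ih hl.2

theorem lcwis_blow_le_wlcwis {σ : Type*} [LinearOrder σ] (w : σ → ℕ) (hw : ∀ a, 0 < w a)
    (A B : List σ) :
    LCWIS (blow w A) (blow w B) ≤ WLCWIS w A B ∧
    WLCWIS w A B = LCWIS (blow w A) (blow w B) := by
  -- sets
  set Slen := {n | ∃ C : List σ, CWIS (blow w A) (blow w B) C ∧ C.length = n} with hSlen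
  set Swt := {n | ∃ C : List σ, CWIS A B C ∧ (C.map w).sum = n} with hSwt
  have hne_len : Slen.Nonempty := ⟨0, [], ⟨List.isChain_nil, nil_sublist _, nil_sublist _⟩, rfl⟩
  have hne_wt : Swt.Nonempty := ⟨0, [], ⟨List.isChain_nil, nil_sublist _, nil_sublist _⟩, rfl⟩
  have hbdd_len : BddAbove Slen := by
    refine ⟨(blow w A).length, fun n hn => ?_⟩
    obtain ⟨C, ⟨_, hCA, _⟩, rfl⟩ := hn
    exact hCA.length_le
  have hbdd_wt : BddAbove Swt := by
    refine ⟨(A.map w).sum, fun n hn => ?_⟩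
    obtain ⟨C, ⟨_, hCA, _⟩, rfl⟩ := hn
    exact (hCA.map w).sum_le_sum fun a _ => Nat.zero_le _
  -- hard direction
  have h1 : LCWIS (blow w A) (blow w B) ≤ WLCWIS w A B := by
    apply csSup_le hne_len
    rintro n ⟨D, ⟨hDchain, hDA, hDB⟩, rfl⟩
    -- canonical contraction of D
    set k : σ → ℕ := fun a => (count a D + w a - 1) / w a with hk
    set Cs : List σ := D.dedup.flatMap fun a => List.replicate (k a) a with hCs
    -- Cs is a chain
    have hCschain : Cs.Chain' (· ≤ ·) :=
      chain'_flatMap_replicate k (hDchain.sublist D.dedup_sublist)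
    -- counts of Cs are at most k
    have hCscount : ∀ b, count b Cs ≤ k b := by
      intro b
      rw [hCs, count_flatMap]
      have : (map (count b ∘ fun a => List.replicate (k a) a) D.dedup) =
          (map (fun a => if a = b then k a else 0) D.dedup) := by
        apply map_congr_left
        intro a _
        simp [count_replicate]
      rw [this]
      exact sum_map_ite_le b k D.nodup_dedup
    -- Cs is a sublist of any list X with C <+ X, C <+ D, D <+ blow C
    have key : ∀ X : List σ, D <+ blow w X → Cs <+ X := by
      intro X hDX
      obtain ⟨C, hCX, hCD, hDC⟩ := exists_contract w X D hDX
      refine (sublist_of_count_le hCschain (hDchain.sublist hCD) ?_).trans hCX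
      intro b
      refine (hCscount b).trans ?_
      have hcnt : count b D ≤ w b * count b C := by
        calc count b D ≤ count b (blow w C) := hDC.count_le _
          _ = w b * count b C := count_blow w b C
      exact ceil_div_le (hw b) hcnt
    have hCsA : Cs <+ A := key A hDA
    have hCsB : Cs <+ B := key B hDB
    -- weight of Cs is at least the length of D
    have hwt : D.length ≤ (Cs.map w).sum := by
      have hlen : D.length = (map (fun a => count a D) D.dedup).sum :=
        (List.sum_map_count_dedup_eq_length D).symm
      have hmap : (Cs.map w).sum = (map (fun a => k a * w a) D.dedup).sum := by
        rw [hCs]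
        induction D.dedup with
        | nil => simp
        | cons a l ihl =>
          rw [flatMap_cons, map_append, sum_append, ihl, map_cons, sum_cons]
          simp [map_replicate, sum_replicate, smul_eq_mul, mul_comm]
      rw [hlen, hmap]
      apply List.sum_le_sum
      intro a _
      exact le_ceil_div_mul (hw a)
    calc D.length ≤ (Cs.map w).sum := hwt
      _ ≤ WLCWIS w A B := le_csSup hbdd_wt ⟨Cs, ⟨hCschain, hCsA, hCsB⟩, rfl⟩
  -- easy direction
  have h2 : WLCWIS w A B ≤ LCWIS (blow w A) (blow w B) := by
    apply csSup_le hne_wt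
    rintro n ⟨C, ⟨hCchain, hCA, hCB⟩, rfl⟩
    have hblowchain : (blow w C).Chain' (· ≤ ·) := chain'_flatMap_replicate w hCchain
    have hlen : (blow w C).length = (C.map w).sum := by
      rw [blow, length_flatMap]
      congr 1
      apply map_congr_left
      intro a _
      simp
    refine le_csSup hbdd_len ⟨blow w C, ⟨hblowchain, ?_, ?_⟩, hlen⟩
    · exact flatMap_sublist_flatMap _ hCA
    · exact flatMap_sublist_flatMap _ hCB
  exact ⟨h1, le_antisymm h2 h1⟩
end

section
/- If C is the longest common weakly increasing subsequence of Â and B̂ (the blown-up versions of A and B), and a is the smallest symbol of the alphabet, then the number of occurrences of a at the beginning of C is a multiple of w(a). -/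
open List

lemma blow_cons {σ : Type*} (w : σ → ℕ) (x : σ) (A : List σ) :
    blow w (x :: A) = List.replicate (w x) x ++ blow w A := by
  simp [blow]

/-- Key lemma: if `a^k ++ D` is a sublist of `blow w A` where `D` does not start with `a`,
then we can round `k` up to a multiple of `w a`. -/
lemma round_up {σ : Type*} [DecidableEq σ] (w : σ → ℕ) (a : σ) :
    ∀ (A : List σ) (k : ℕ) (D : List σ), (∀ x, D.head? = some x → x ≠ a) →
    List.replicate k a ++ D <+ blow w A →
    ∃ m, w a ∣ m ∧ k ≤ m ∧ List.replicate m a ++ D <+ blow w A := by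
  intro A
  induction A with
  | nil =>
    intro k D hD h
    simp only [blow, flatMap_nil, sublist_nil, append_eq_nil_iff, replicate_eq_nil_iff] at h
    exact ⟨0, dvd_zero _, Nat.le_of_eq h.1, by simp [h.1, h.2, blow]⟩
  | cons x A ih =>
    intro k D hD h
    rw [blow_cons] at h
    obtain ⟨l₁, l₂, heq, h₁, h₂⟩ := List.sublist_append_iff.mp h
    obtain ⟨j, hj, rfl⟩ := List.sublist_replicate_iff.mp h₁
    by_cases hxa : x = a
    · subst hxa
      -- show j ≤ k
      have hjk : j ≤ k := by
        by_contra hlt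
        push_neg at hlt
        -- element at index k of both sides
        have heq' := congrArg (fun l => l[k]?) heq
        have hL : (List.replicate k x ++ D)[k]? = D[0]? := by
          rw [List.getElem?_append_right (by simp)]
          simp
        have hR : (List.replicate j x ++ l₂)[k]? = some x := by
          rw [List.getElem?_append_left (by simpa using hlt)]
          simp [hlt]
        rw [hL, hR] at heq'
        have : D.head? = some x := by rw [head?_eq_getElem?, heq']
        exact hD x this rfl
      -- l₂ = replicate (k - j) a ++ D
      have hsplit : List.replicate k x ++ D
          = List.replicate j x ++ (List.replicate (k - j) x ++ D) := by
        rw [← List.append_assoc, ← List.replicate_add]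
        congr 2
        omega
      rw [hsplit] at heq
      have hl₂ : l₂ = List.replicate (k - j) x ++ D := (List.append_cancel_left heq).symm
      obtain ⟨m, hdvd, hle, hsub⟩ := ih (k - j) D hD (hl₂ ▸ h₂)
      refine ⟨w x + m, dvd_add dvd_rfl hdvd, by omega, ?_⟩
      rw [List.replicate_add, List.append_assoc]
      exact (List.Sublist.refl _).append hsub
    · -- x ≠ a : either k = 0 or j = 0
      rcases Nat.eq_zero_or_pos k with hk | hk
      · refine ⟨0, dvd_zero _, by omega, ?_⟩
        rw [hk] at h
        simpa [blow_cons] using h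
      rcases Nat.eq_zero_or_pos j with hjz | hjz
      · rw [hjz] at heq
        simp only [List.replicate_zero, List.nil_append] at heq
        obtain ⟨m, hdvd, hle, hsub⟩ := ih k D hD (heq ▸ h₂)
        exact ⟨m, hdvd, hle, hsub.trans (List.sublist_append_right _ _)⟩
      · exfalso
        -- first element of heq LHS is a, RHS is x
        have heq' := congrArg (fun l => l[0]?) heq
        rw [List.getElem?_append_left (by simpa using hk),
          List.getElem?_append_left (by simpa using hjz)] at heq'
        simp [hk, hjz, Nat.pos_iff_ne_zero] at heq'
        exact hxa heq'.symm

theorem takeWhile_min_length_dvd {σ : Type*} [LinearOrder σ] (w : σ → ℕ) (hw : ∀ b, 0 < w b)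
    (A B C : List σ) (a : σ) (ha : ∀ b : σ, a ≤ b)
    (hC : CWIS (blow w A) (blow w B) C)
    (hmax : ∀ C' : List σ, CWIS (blow w A) (blow w B) C' → C'.length ≤ C.length) :
    w a ∣ (C.takeWhile (fun x => x = a)).length := by
  classical
  set k := (C.takeWhile (fun x => x = a)).length with hk
  set D := C.dropWhile (fun x => x = a) with hDdef
  by_contra hdvd
  obtain ⟨hchain, hA, hB⟩ := hC
  have hCeq : C = List.replicate k a ++ D := by
    conv_lhs => rw [← List.takeWhile_append_dropWhile (p := fun x => decide (x = a)) (l := C)]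
    congr 1
    rw [List.eq_replicate_iff]
    exact ⟨rfl, fun b hb => by simpa using List.mem_takeWhile_imp hb⟩
  have hD : ∀ x, D.head? = some x → x ≠ a := by
    intro x hx
    have := List.head?_dropWhile_not (fun x => decide (x = a)) C
    rw [← hDdef, hx] at this
    simpa using this
  obtain ⟨mA, hdA, hleA, hsubA⟩ := round_up w a A k D hD (hCeq ▸ hA)
  obtain ⟨mB, hdB, hleB, hsubB⟩ := round_up w a B k D hD (hCeq ▸ hB)
  set M := w a * (k / w a + 1) with hM
  have hwa := hw a
  have hkM : k < M := by
    have h1 := Nat.div_add_mod k (w a)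
    have h2 := Nat.mod_lt k hwa
    have hM' : M = w a * (k / w a) + w a := by rw [hM]; ring
    omega
  have hMle : ∀ m, w a ∣ m → k ≤ m → M ≤ m := by
    rintro m ⟨t, rfl⟩ hkm
    have hkt : k < t * w a := by
      rw [mul_comm]
      exact lt_of_le_of_ne hkm (fun he => hdvd (he ▸ ⟨t, rfl⟩))
    have : k / w a + 1 ≤ t := by
      have := (Nat.div_lt_iff_lt_mul hwa).mpr hkt
      omega
    exact Nat.mul_le_mul_left _ this
  have hsubA' : List.replicate M a ++ D <+ blow w A :=
    ((List.replicate_sublist_replicate a).mpr (hMle mA hdA hleA)).append (List.Sublist.refl D)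
      |>.trans hsubA
  have hsubB' : List.replicate M a ++ D <+ blow w B :=
    ((List.replicate_sublist_replicate a).mpr (hMle mB hdB hleB)).append (List.Sublist.refl D)
      |>.trans hsubB
  have hchainD : D.Chain' (· ≤ ·) := by
    rw [hCeq, List.Chain', List.isChain_append] at hchain
    exact hchain.2.1
  have hchain' : (List.replicate M a ++ D).Chain' (· ≤ ·) := by
    rw [List.Chain', List.isChain_append]
    refine ⟨?_, hchainD, ?_⟩
    · exact List.isChain_iff_pairwise.mpr (List.pairwise_replicate.mpr (Or.inr le_rfl))
    · intro x hx y _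
      have : x ∈ List.replicate M a := List.mem_of_mem_getLast? hx
      rw [List.eq_of_mem_replicate this]
      exact ha y
  have := hmax _ ⟨hchain', hsubA', hsubB'⟩
  rw [hCeq] at this
  simp only [List.length_append, List.length_replicate] at this
  omega
end

section
/- For the coordinate gadgets CG₁(x,i) and CG₂(y,i), the longest common weakly increasing subsequence has length 0 if x = 1 and y = 1, and length 1 otherwise. That is, LCWIS(CG₁(x,i), CG₂(y,i)) = 1 − x·y for x, y ∈ {0,1}. -/
open List

/-- First coordinate gadget. -/
def CG1 (x i : ℕ) : List ℕ := if x = 1 then [3*i+2] else [3*i, 3*i+1]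

/-- Second coordinate gadget. -/
def CG2 (x i : ℕ) : List ℕ := if x = 1 then [3*i+1] else [3*i, 3*i+2]

/-- First vector gadget: concatenation of coordinate gadgets (coordinate `k` uses index `k+1`). -/
def VG1 {d : ℕ} (u : Fin d → ℕ) : List ℕ :=
  (List.finRange d).flatMap fun k => CG1 (u k) (k.val + 1)

/-- Second vector gadget. -/
def VG2 {d : ℕ} (v : Fin d → ℕ) : List ℕ :=
  (List.finRange d).flatMap fun k => CG2 (v k) (k.val + 1)

lemma sublist_pair {a b : ℕ} {C : List ℕ} (h : C.Sublist [a,b]) :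
    C = [] ∨ C = [a] ∨ C = [b] ∨ C = [a,b] := by
  simp only [List.sublist_cons_iff, List.sublist_nil] at h
  rcases h with h | ⟨r, rfl, hr⟩
  · rcases h with rfl | ⟨r, rfl, rfl⟩ <;> simp
  · rcases hr with hr | ⟨s, rfl, rfl⟩
    · subst hr; simp
    · simp

theorem lcwis_coordinate_gadgets (x y i : ℕ) (hx : x = 0 ∨ x = 1) (hy : y = 0 ∨ y = 1)
    (hi : 1 ≤ i) :
    LCWIS (CG1 x i) (CG2 y i) = 1 - x * y := by
  rcases hx with rfl | rfl <;> rcases hy with rfl | rfl <;>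
    simp only [CG1, CG2, if_neg (Nat.zero_ne_one), eq_self_iff_true, if_true] <;> unfold LCWIS
  · -- x=0 y=0 : A=[3i,3i+1], B=[3i,3i+2]
    have hset : {n | ∃ C : List ℕ, CWIS [3*i, 3*i+1] [3*i, 3*i+2] C ∧ C.length = n}
        = ({0, 1} : Set ℕ) := by
      ext n
      constructor
      · rintro ⟨C, ⟨_, h1, h2⟩, rfl⟩
        rcases sublist_pair h1 with rfl | rfl | rfl | rfl
        · simp
        · simp
        · simp
        · exfalso
          rcases sublist_pair h2 with h | h | h | h <;>
            simp only [List.cons.injEq, List.cons_ne_nil, and_false, List.ne_nil_of_length_pos] at h <;>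
            omega
      · rintro (rfl | rfl)
        · exact ⟨[], ⟨by exact List.isChain_nil, by simp, by simp⟩, rfl⟩
        · exact ⟨[3*i], ⟨by exact List.isChain_singleton _, by simp, by simp⟩, rfl⟩
    rw [hset, csSup_pair]; simp
  · -- x=0 y=1 : A=[3i,3i+1], B=[3i+1]
    have hset : {n | ∃ C : List ℕ, CWIS [3*i, 3*i+1] [3*i+1] C ∧ C.length = n}
        = ({0, 1} : Set ℕ) := by
      ext n
      constructor
      · rintro ⟨C, ⟨_, h1, h2⟩, rfl⟩
        rw [List.sublist_singleton] at h2
        rcases h2 with rfl | rfl <;> simp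
      · rintro (rfl | rfl)
        · exact ⟨[], ⟨by exact List.isChain_nil, by simp, by simp⟩, rfl⟩
        · exact ⟨[3*i+1], ⟨by exact List.isChain_singleton _, by simp, by simp⟩, rfl⟩
    rw [hset, csSup_pair]; simp
  · -- x=1 y=0 : A=[3i+2], B=[3i,3i+2]
    have hset : {n | ∃ C : List ℕ, CWIS [3*i+2] [3*i, 3*i+2] C ∧ C.length = n}
        = ({0, 1} : Set ℕ) := by
      ext n
      constructor
      · rintro ⟨C, ⟨_, h1, h2⟩, rfl⟩
        rw [List.sublist_singleton] at h1
        rcases h1 with rfl | rfl <;> simp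
      · rintro (rfl | rfl)
        · exact ⟨[], ⟨by exact List.isChain_nil, by simp, by simp⟩, rfl⟩
        · exact ⟨[3*i+2], ⟨by exact List.isChain_singleton _, by simp, by simp⟩, rfl⟩
    rw [hset, csSup_pair]; simp
  · -- x=1 y=1
    have hset : {n | ∃ C : List ℕ, CWIS [3*i+2] [3*i+1] C ∧ C.length = n} = ({0} : Set ℕ) := by
      ext n
      constructor
      · rintro ⟨C, ⟨_, h1, h2⟩, rfl⟩
        rw [List.sublist_singleton] at h1 h2
        rcases h1 with rfl | rfl
        · simp
        · rcases h2 with h | h <;> simp_all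
      · rintro rfl
        exact ⟨[], ⟨by exact List.isChain_nil, by simp, by simp⟩, rfl⟩
    rw [hset, csSup_singleton]
end

section
/- For vectors u, v ∈ {0,1}^d, the longest common weakly increasing subsequence of the vector gadgets VG₁(u) and VG₂(v) has length exactly d − (u·v), where u·v = ∑ᵢ uᵢvᵢ. -/
open List

lemma mem_CG1_bounds {x a i : ℕ} (h : x ∈ CG1 a i) : 3*i ≤ x ∧ x ≤ 3*i+2 := by
  unfold CG1 at h; split at h <;> simp at h <;> omega

lemma mem_CG2_bounds {x a i : ℕ} (h : x ∈ CG2 a i) : 3*i ≤ x ∧ x ≤ 3*i+2 := by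
  unfold CG2 at h; split at h <;> simp at h <;> omega

lemma flatMap_sublist {α β : Type*} {f g : α → List β} :
    ∀ (l : List α), (∀ a ∈ l, (f a).Sublist (g a)) → (l.flatMap f).Sublist (l.flatMap g)
  | [], _ => by simp
  | a :: l, h => by
    simp only [flatMap_cons]
    exact (h a mem_cons_self).append
      (flatMap_sublist l fun b hb => h b (mem_cons_of_mem a hb))

lemma mem_VG2_iff {d : ℕ} (v : Fin d → ℕ) (k : Fin d) {x : ℕ}
    (h1 : 3*(k.val+1) ≤ x) (h2 : x ≤ 3*(k.val+1)+2) :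
    x ∈ VG2 v ↔ x ∈ CG2 (v k) (k.val+1) := by
  constructor
  · intro hx
    rw [VG2, mem_flatMap] at hx
    obtain ⟨j, -, hj⟩ := hx
    obtain ⟨hj1, hj2⟩ := mem_CG2_bounds hj
    have : j = k := Fin.ext (by omega)
    rwa [this] at hj
  · intro hx
    exact mem_flatMap.mpr ⟨k, mem_finRange k, hx⟩

lemma filter_CG1 {d : ℕ} (u v : Fin d → ℕ) (k : Fin d)
    (h1 : u k = 0 ∨ u k = 1) (h2 : v k = 0 ∨ v k = 1) :
    (CG1 (u k) (k.val+1)).filter (fun x => decide (x ∈ VG2 v)) =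
      if u k * v k = 1 then [] else
        if v k = 1 then [3*(k.val+1)+1] else
          if u k = 1 then [3*(k.val+1)+2] else [3*(k.val+1)] := by
  set i := k.val + 1 with hi
  have hm : ∀ x, 3*i ≤ x → x ≤ 3*i+2 → ((x ∈ VG2 v) ↔ x ∈ CG2 (v k) i) :=
    fun x hx1 hx2 => mem_VG2_iff v k hx1 hx2
  rcases h1 with h1 | h1 <;> rcases h2 with h2 | h2 <;>
    simp only [h1, h2, CG1, CG2, mul_zero, zero_mul, mul_one, one_ne_zero, zero_ne_one,
      if_true, if_false, ite_true, ite_false, reduceIte] at hm ⊢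
  · rw [filter_cons_of_pos, filter_cons_of_neg, filter_nil]
    · rw [decide_eq_true_eq, hm (3*i+1) (by omega) (by omega)]
      simp <;> omega
    · rw [decide_eq_true_eq, hm (3*i) (by omega) (by omega)]; simp
  · rw [filter_cons_of_neg, filter_cons_of_pos, filter_nil]
    · rw [decide_eq_true_eq, hm (3*i+1) (by omega) (by omega)]; simp
    · rw [decide_eq_true_eq, hm (3*i) (by omega) (by omega)]
      simp <;> omega
  · rw [filter_cons_of_pos, filter_nil]
    rw [decide_eq_true_eq, hm (3*i+2) (by omega) (by omega)]; simp
  · rw [filter_cons_of_neg, filter_nil]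
    rw [decide_eq_true_eq, hm (3*i+2) (by omega) (by omega)]
    simp <;> omega

theorem lcwis_vector_gadgets {d : ℕ} (u v : Fin d → ℕ)
    (hu : ∀ k, u k = 0 ∨ u k = 1) (hv : ∀ k, v k = 0 ∨ v k = 1) :
    LCWIS (VG1 u) (VG2 v) = d - ∑ k : Fin d, u k * v k := by
  classical
  set p : ℕ → Bool := fun x => decide (x ∈ VG2 v) with hp
  set C0 : List ℕ := (VG1 u).filter p with hC0
  have hC0f : C0 = (List.finRange d).flatMap
      fun k => (CG1 (u k) (k.val+1)).filter p := by
    rw [hC0, VG1, List.filter_flatMap]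
  -- C0 is a sublist of VG1
  have hs1 : C0.Sublist (VG1 u) := List.filter_sublist
  -- per-block facts
  have hbsub : ∀ k : Fin d,
      ((CG1 (u k) (k.val+1)).filter p).Sublist (CG2 (v k) (k.val+1)) := by
    intro k
    rw [hp, filter_CG1 u v k (hu k) (hv k)]
    rcases hu k with h1 | h1 <;> rcases hv k with h2 | h2 <;>
      simp [h1, h2, CG2]
  have hblen : ∀ k : Fin d,
      ((CG1 (u k) (k.val+1)).filter p).length = 1 - u k * v k := by
    intro k
    rw [hp, filter_CG1 u v k (hu k) (hv k)]
    rcases hu k with h1 | h1 <;> rcases hv k with h2 | h2 <;> simp [h1, h2]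
  -- C0 is a sublist of VG2
  have hs2 : C0.Sublist (VG2 v) := by
    rw [hC0f, VG2]
    exact flatMap_sublist _ fun k _ => hbsub k
  -- C0 is weakly increasing
  have hchain : C0.Chain' (· ≤ ·) := by
    unfold List.Chain'
    rw [List.isChain_iff_pairwise, hC0f, List.pairwise_flatMap]
    constructor
    · intro k _
      refine List.Pairwise.sublist List.filter_sublist ?_
      rcases hu k with h1 | h1 <;> simp [CG1, h1] <;> omega
    · refine (List.pairwise_lt_finRange d).imp ?_
      intro j k hjk x hx y hy
      have hx' := mem_CG1_bounds (List.mem_of_mem_filter hx)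
      have hy' := mem_CG1_bounds (List.mem_of_mem_filter hy)
      have : j.val < k.val := hjk
      omega
  -- the length of C0
  have hlen : C0.length = d - ∑ k : Fin d, u k * v k := by
    rw [hC0f, List.length_flatMap]
    have : ((List.finRange d).map fun k => ((CG1 (u k) (k.val+1)).filter p).length).sum
        = ∑ k : Fin d, (1 - u k * v k) := by
      rw [Fin.sum_univ_def]
      congr 1
      exact List.map_congr_left fun k _ => hblen k
    rw [this, Finset.sum_tsub_distrib _ fun k _ => by
      rcases hu k with h1 | h1 <;> rcases hv k with h2 | h2 <;> simp [h1, h2]]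
    simp
  -- the supremum
  have hub : ∀ n ∈ {n | ∃ C : List ℕ, CWIS (VG1 u) (VG2 v) C ∧ C.length = n},
      n ≤ C0.length := by
    rintro n ⟨C, ⟨-, s1, s2⟩, rfl⟩
    have hCf : C.filter p = C :=
      List.filter_eq_self.mpr fun a ha => by
        simpa [hp] using s2.subset ha
    calc C.length = (C.filter p).length := by rw [hCf]
      _ ≤ C0.length := (s1.filter p).length_le
  have hmem : C0.length ∈ {n | ∃ C : List ℕ, CWIS (VG1 u) (VG2 v) C ∧ C.length = n} :=
    ⟨C0, ⟨hchain, hs1, hs2⟩, rfl⟩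
  rw [LCWIS, ← hlen]
  exact le_antisymm (csSup_le ⟨_, hmem⟩ hub) (le_csSup ⟨C0.length, hub⟩ hmem)
end

section
/- LCWIS(VG₁(u), VG₂(v)) ≥ d − u·v for all u, v ∈ {0,1}^d: there exists a weakly increasing common subsequence of the two vector gadgets of length d − u·v. -/
open List

lemma flatMap_sublist_of_forall {α β : Type*} (l : List α) (f g : α → List β)
    (h : ∀ a ∈ l, (f a).Sublist (g a)) : (l.flatMap f).Sublist (l.flatMap g) := by
  induction l with
  | nil => simp
  | cons a t ih =>
    simp only [List.flatMap_cons]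
    exact (h a List.mem_cons_self).append
      (ih fun x hx => h x (List.mem_cons_of_mem a hx))

theorem lcwis_vector_gadgets_ge {d : ℕ} (u v : Fin d → ℕ)
    (hu : ∀ k, u k = 0 ∨ u k = 1) (hv : ∀ k, v k = 0 ∨ v k = 1) :
    (∃ C : List ℕ, CWIS (VG1 u) (VG2 v) C ∧ C.length = d - ∑ k : Fin d, u k * v k) ∧
    d - ∑ k : Fin d, u k * v k ≤ LCWIS (VG1 u) (VG2 v) := by
  classical
  set pick : Fin d → List ℕ :=
    fun k => if u k * v k = 1 then [] else [3*(k.val+1) + 2 * u k + v k] with hpick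
  set C : List ℕ := (List.finRange d).flatMap pick with hC
  -- elements of pick k are in [3k+3, 3k+5]
  have hmem : ∀ k : Fin d, ∀ x ∈ pick k,
      3*(k.val+1) ≤ x ∧ x ≤ 3*(k.val+1) + 2 := by
    intro k x hx
    simp only [hpick] at hx
    split at hx
    · simp at hx
    · rename_i h
      simp only [List.mem_singleton] at hx
      subst hx
      rcases hu k with h1 | h1 <;> rcases hv k with h2 | h2 <;> rw [h1, h2] at h ⊢ <;> omega
  have hchain : C.Chain' (· ≤ ·) := by
    apply List.Pairwise.isChain
    rw [hC, List.pairwise_flatMap]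
    constructor
    · intro k _
      simp only [hpick]
      split <;> simp
    · rw [List.pairwise_iff_get]
      intro i j hij x hx y hy
      have h1 := hmem _ x hx
      have h2 := hmem _ y hy
      have : ((List.finRange d).get i).val < ((List.finRange d).get j).val := by
        simpa using hij
      omega
  have hsub1 : C.Sublist (VG1 u) := by
    apply flatMap_sublist_of_forall
    intro k _
    simp only [hpick, CG1]
    rcases hu k with h1 | h1 <;> rcases hv k with h2 | h2 <;>
      simp [h1, h2]
  have hsub2 : C.Sublist (VG2 v) := by
    apply flatMap_sublist_of_forall
    intro k _
    simp only [hpick, CG2]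
    rcases hu k with h1 | h1 <;> rcases hv k with h2 | h2 <;>
      simp [h1, h2]
  have hlen : C.length = d - ∑ k : Fin d, u k * v k := by
    rw [hC, List.length_flatMap]
    have : ∀ k : Fin d, (List.length ∘ pick) k = 1 - u k * v k := by
      intro k
      simp only [Function.comp, hpick]
      split <;> rename_i h
      · simp [h]
      · have : u k * v k = 0 := by
          rcases hu k with h1 | h1 <;> rcases hv k with h2 | h2 <;> simp [h1, h2] at h ⊢
        simp [this]
    calc (List.map (List.length ∘ pick) (List.finRange d)).sum
        = ∑ k : Fin d, (1 - u k * v k) := by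
          rw [Fin.sum_univ_def]; congr 1; exact List.map_congr_left fun k _ => this k
      _ = d - ∑ k : Fin d, u k * v k := by
          have hle : ∀ k : Fin d, u k * v k ≤ 1 := by
            intro k; rcases hu k with h1 | h1 <;> rcases hv k with h2 | h2 <;> simp [h1, h2]
          have key : (∑ k : Fin d, (1 - u k * v k)) + ∑ k : Fin d, u k * v k = d := by
            rw [← Finset.sum_add_distrib]
            have : ∀ k : Fin d, (1 - u k * v k) + u k * v k = 1 := fun k => by
              have := hle k; omega
            simp [this]
          omega
  have hcwis : CWIS (VG1 u) (VG2 v) C := ⟨hchain, hsub1, hsub2⟩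
  refine ⟨⟨C, hcwis, hlen⟩, ?_⟩
  have hbdd : BddAbove {n | ∃ C : List ℕ, CWIS (VG1 u) (VG2 v) C ∧ C.length = n} := by
    refine ⟨(VG1 u).length, ?_⟩
    rintro n ⟨D, hD, rfl⟩
    exact hD.2.1.length_le
  exact le_csSup hbdd ⟨C, hcwis, hlen⟩
end

section
/- LCWIS(VG₁(u), VG₂(v)) ≤ d − u·v for all u, v ∈ {0,1}^d: any weakly increasing common subsequence of the two vector gadgets has length at most d − u·v. Key facts used: every symbol of the gadgets for coordinate i lies in {3i, 3i+1, 3i+2}, so a weakly increasing common subsequence contributes at most one symbol per coordinate pair (CG₁(uᵢ,i), CG₂(vᵢ,i)), and zero symbols when uᵢ = vᵢ = 1. -/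
open List

lemma CG1_range {x i n : ℕ} (h : n ∈ CG1 x i) : 3*i ≤ n ∧ n ≤ 3*i+2 := by
  unfold CG1 at h; split at h <;> simp at h <;> omega

lemma CG2_range {x i n : ℕ} (h : n ∈ CG2 x i) : 3*i ≤ n ∧ n ≤ 3*i+2 := by
  unfold CG2 at h; split at h <;> simp at h <;> omega

lemma common_det {x y i n : ℕ} (hx : x = 0 ∨ x = 1) (hy : y = 0 ∨ y = 1)
    (h1 : n ∈ CG1 x i) (h2 : n ∈ CG2 y i) : x * y = 0 ∧ n = 3*i + 2*x + y := by
  rcases hx with hx | hx <;> rcases hy with hy | hy <;>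
    subst hx <;> subst hy <;> simp [CG1, CG2] at h1 h2 <;> omega

lemma VG_common {d : ℕ} {u v : Fin d → ℕ} (hu : ∀ k, u k = 0 ∨ u k = 1)
    (hv : ∀ k, v k = 0 ∨ v k = 1) {n : ℕ} (h1 : n ∈ VG1 u) (h2 : n ∈ VG2 v) :
    ∃ k : Fin d, u k * v k = 0 ∧ n = 3*(k.val+1) + 2*(u k) + (v k) := by
  rw [VG1, List.mem_flatMap] at h1
  rw [VG2, List.mem_flatMap] at h2
  obtain ⟨k1, -, hk1⟩ := h1
  obtain ⟨k2, -, hk2⟩ := h2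
  have r1 := CG1_range hk1
  have r2 := CG2_range hk2
  have hk : k1 = k2 := Fin.ext (by omega)
  subst hk
  exact ⟨k1, common_det (hu k1) (hv k1) hk1 hk2⟩

lemma VG1_nodup {d : ℕ} (u : Fin d → ℕ) : (VG1 u).Nodup := by
  rw [VG1, List.nodup_flatMap]
  constructor
  · intro k _
    unfold CG1; split <;> simp
  · have : (List.finRange d).Pairwise (· ≠ ·) := (List.nodup_finRange d)
    refine this.imp ?_
    intro a b hab n ha hb
    have r1 := CG1_range ha
    have r2 := CG1_range hb
    have : a.val = b.val := by omega
    exact hab (Fin.ext this)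

theorem lcwis_vector_gadgets_le {d : ℕ} (u v : Fin d → ℕ)
    (hu : ∀ k, u k = 0 ∨ u k = 1) (hv : ∀ k, v k = 0 ∨ v k = 1) :
    (∀ C : List ℕ, CWIS (VG1 u) (VG2 v) C → C.length ≤ d - ∑ k : Fin d, u k * v k) ∧
    LCWIS (VG1 u) (VG2 v) ≤ d - ∑ k : Fin d, u k * v k := by
  have key : ∀ C : List ℕ, CWIS (VG1 u) (VG2 v) C →
      C.length ≤ d - ∑ k : Fin d, u k * v k := by
    rintro C ⟨-, hC1, hC2⟩
    have hnd : C.Nodup := (VG1_nodup u).sublist hC1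
    set T : Finset (Fin d) := Finset.univ.filter (fun k => u k * v k = 0) with hT
    have hmaps : ∀ n ∈ C.toFinset, n / 3 ∈ T.image (fun k : Fin d => k.val + 1) := by
      intro n hn
      rw [List.mem_toFinset] at hn
      obtain ⟨k, hk0, hkn⟩ := VG_common hu hv (hC1.subset hn) (hC2.subset hn)
      refine Finset.mem_image.2 ⟨k, Finset.mem_filter.2 ⟨Finset.mem_univ _, hk0⟩, ?_⟩
      rcases hu k with h1 | h1 <;> rcases hv k with h2 | h2 <;>
        simp only [h1, h2] at hkn hk0 <;> omega
    have hinj : Set.InjOn (fun n => n / 3) C.toFinset := by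
      intro n hn m hm hnm
      simp only [Finset.mem_coe, List.mem_toFinset] at hn hm
      obtain ⟨k, hk0, hkn⟩ := VG_common hu hv (hC1.subset hn) (hC2.subset hn)
      obtain ⟨l, hl0, hlm⟩ := VG_common hu hv (hC1.subset hm) (hC2.subset hm)
      simp only at hnm
      rcases hu k with h1 | h1 <;> rcases hv k with h2 | h2 <;>
        rcases hu l with h3 | h3 <;> rcases hv l with h4 | h4 <;>
        · simp only [h1, h2] at hkn hk0
          simp only [h3, h4] at hlm hl0
          have hkl : k = l := Fin.ext (by omega)
          subst hkl; omega
    have hcard := Finset.card_le_card_of_injOn (fun n => n / 3) hmaps hinj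
    have hTc : (∑ k : Fin d, u k * v k) + T.card = d := by
      have h1 : ∑ k : Fin d, u k * v k
          = (Finset.univ.filter (fun k : Fin d => ¬ u k * v k = 0)).card := by
        rw [Finset.card_filter]
        refine Finset.sum_congr rfl fun k _ => ?_
        rcases hu k with h1 | h1 <;> rcases hv k with h2 | h2 <;> simp [h1, h2]
      rw [h1, hT, add_comm, Finset.card_filter_add_card_filter_not]
      simp
    have : C.toFinset.card ≤ T.card :=
      le_trans hcard (Finset.card_image_le)
    rw [List.toFinset_card_of_nodup hnd] at this
    omega
  refine ⟨key, ?_⟩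
  apply csSup_le
  · exact ⟨0, [], ⟨List.isChain_nil, List.nil_sublist _, List.nil_sublist _⟩, rfl⟩
  · rintro n ⟨C, hC, rfl⟩
    exact key C hC
end

section
/- A weakly increasing common subsequence of two sequences of the form X = X' σ₁ X'' and Y = Y' σ₁ Y'' where the middle symbols come from disjoint coordinate blocks: if every symbol of a sequence S lies in the interval [3i, 3i+2] for its coordinate i, and the blocks appear in increasing order of i in both sequences, then any weakly increasing common subsequence decomposes as a concatenation of weakly increasing common subsequences of the corresponding blocks. -/
open List

/-- Blow-up: replace each symbol `a` by `w a` consecutive copies of `a`. -/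

private lemma decomp_flatten {Ls : List (List ℕ)} {C : List ℕ} (h : C <+ Ls.flatten) :
    ∃ Cs : List (List ℕ), C = Cs.flatten ∧ List.Forall₂ (· <+ ·) Cs Ls := by
  induction Ls generalizing C with
  | nil =>
    simp only [List.flatten_nil, List.sublist_nil] at h
    exact ⟨[], by simp [h], List.Forall₂.nil⟩
  | cons a Ls ih =>
    rw [List.flatten_cons, List.sublist_append_iff] at h
    obtain ⟨C1, C2, rfl, h1, h2⟩ := h
    obtain ⟨Cs, rfl, h3⟩ := ih h2
    exact ⟨C1 :: Cs, by simp, List.Forall₂.cons h1 h3⟩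

private lemma filter_flatten_block : ∀ (Cs : List (List ℕ)) (k j : ℕ),
    (∀ (i : ℕ) (h : i < Cs.length), ∀ x ∈ Cs[i], 3 * (k + i) ≤ x ∧ x ≤ 3 * (k + i) + 2) →
    Cs.flatten.filter (fun x => decide (3 * (k + j) ≤ x ∧ x ≤ 3 * (k + j) + 2))
      = (Cs[j]?).getD [] := by
  intro Cs
  induction Cs with
  | nil => intro k j _; simp
  | cons a Cs ih =>
    intro k j hmem
    have ha : ∀ x ∈ a, 3 * k ≤ x ∧ x ≤ 3 * k + 2 := by
      have := hmem 0 (by simp)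
      simpa using this
    have htail : ∀ (i : ℕ) (h : i < Cs.length), ∀ x ∈ Cs[i],
        3 * ((k + 1) + i) ≤ x ∧ x ≤ 3 * ((k + 1) + i) + 2 := by
      intro i h x hx
      have := hmem (i + 1) (by simpa using Nat.succ_lt_succ h) x (by simpa using hx)
      constructor <;> omega
    rw [List.flatten_cons, List.filter_append]
    cases j with
    | zero =>
      have h1 : a.filter (fun x => decide (3 * (k + 0) ≤ x ∧ x ≤ 3 * (k + 0) + 2)) = a := by
        rw [List.filter_eq_self]
        intro x hx
        have := ha x hx
        simp only [decide_eq_true_eq]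
        omega
      have h2 : Cs.flatten.filter (fun x => decide (3 * (k + 0) ≤ x ∧ x ≤ 3 * (k + 0) + 2)) = [] := by
        rw [List.filter_eq_nil_iff]
        intro x hx
        obtain ⟨l, hl, hxl⟩ := List.mem_flatten.mp hx
        obtain ⟨i, hi, rfl⟩ := List.mem_iff_getElem.mp hl
        have := htail i hi x hxl
        simp only [decide_eq_true_eq]
        omega
      simp only [h1, h2, List.append_nil, List.getElem?_cons_zero, Option.getD_some]
    | succ j =>
      have h1 : a.filter (fun x => decide (3 * (k + (j + 1)) ≤ x ∧ x ≤ 3 * (k + (j + 1)) + 2)) = [] := by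
        rw [List.filter_eq_nil_iff]
        intro x hx
        have := ha x hx
        simp only [decide_eq_true_eq]
        omega
      have h2 := ih (k + 1) j htail
      have harith : k + (j + 1) = (k + 1) + j := by omega
      rw [h1, List.nil_append, harith, h2]
      simp

theorem cwis_block_decomposition {d : ℕ} (A B : Fin d → List ℕ)
    (hA : ∀ i : Fin d, ∀ x ∈ A i, 3 * (i.val + 1) ≤ x ∧ x ≤ 3 * (i.val + 1) + 2)
    (hB : ∀ i : Fin d, ∀ x ∈ B i, 3 * (i.val + 1) ≤ x ∧ x ≤ 3 * (i.val + 1) + 2)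
    (C : List ℕ)
    (hC : CWIS ((List.finRange d).flatMap A) ((List.finRange d).flatMap B) C) :
    ∃ Cs : Fin d → List ℕ,
      (∀ i : Fin d, CWIS (A i) (B i) (Cs i)) ∧
      C = (List.finRange d).flatMap Cs := by
  obtain ⟨hchain, hsubA, hsubB⟩ := hC
  rw [List.flatMap_def] at hsubA hsubB
  obtain ⟨Cs, hCeq, hCsA⟩ := decomp_flatten hsubA
  obtain ⟨Ds, hDeq, hDsB⟩ := decomp_flatten hsubB
  rw [List.forall₂_iff_get] at hCsA hDsB
  obtain ⟨hlenC, hgetC⟩ := hCsA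
  obtain ⟨hlenD, hgetD⟩ := hDsB
  simp only [List.length_map, List.length_finRange] at hlenC hlenD
  have hsubCA : ∀ (i : ℕ) (h : i < d), Cs[i]'(h.trans_eq hlenC.symm) <+ A ⟨i, h⟩ := by
    intro i h
    have := hgetC i (h.trans_eq hlenC.symm) (by simp [h])
    simpa [List.getElem_finRange] using this
  have hsubDB : ∀ (i : ℕ) (h : i < d), Ds[i]'(h.trans_eq hlenD.symm) <+ B ⟨i, h⟩ := by
    intro i h
    have := hgetD i (h.trans_eq hlenD.symm) (by simp [h])
    simpa [List.getElem_finRange] using this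
  have hmemC : ∀ (i : ℕ) (h : i < Cs.length), ∀ x ∈ Cs[i],
      3 * (1 + i) ≤ x ∧ x ≤ 3 * (1 + i) + 2 := by
    intro i h x hx
    have hd : i < d := h.trans_eq hlenC
    have := hA ⟨i, hd⟩ x ((hsubCA i hd).mem hx)
    simp only [Fin.val_mk] at this
    constructor <;> omega
  have hmemD : ∀ (i : ℕ) (h : i < Ds.length), ∀ x ∈ Ds[i],
      3 * (1 + i) ≤ x ∧ x ≤ 3 * (1 + i) + 2 := by
    intro i h x hx
    have hd : i < d := h.trans_eq hlenD
    have := hB ⟨i, hd⟩ x ((hsubDB i hd).mem hx)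
    simp only [Fin.val_mk] at this
    constructor <;> omega
  have hCD : ∀ (j : ℕ) (hj : j < d), Cs[j]'(hj.trans_eq hlenC.symm) = Ds[j]'(hj.trans_eq hlenD.symm) := by
    intro j hj
    have e1 := filter_flatten_block Cs 1 j hmemC
    have e2 := filter_flatten_block Ds 1 j hmemD
    rw [← hCeq] at e1
    rw [← hDeq] at e2
    have := e1.symm.trans e2
    rwa [List.getElem?_eq_getElem (hj.trans_eq hlenC.symm), List.getElem?_eq_getElem (hj.trans_eq hlenD.symm),
      Option.getD_some, Option.getD_some] at this
  refine ⟨fun i => Cs[i.val]'(i.isLt.trans_eq hlenC.symm), ?_, ?_⟩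
  · intro i
    have hmemCs : Cs[i.val]'(i.isLt.trans_eq hlenC.symm) ∈ Cs := List.getElem_mem _
    have hsubC : Cs[i.val]'(i.isLt.trans_eq hlenC.symm) <+ C := hCeq ▸ List.sublist_flatten_of_mem hmemCs
    refine ⟨?_, ?_, ?_⟩
    · simp only [List.Chain', List.isChain_iff_pairwise] at hchain ⊢
      exact hchain.sublist hsubC
    · exact hsubCA i.val i.isLt
    · show Cs[i.val]'(i.isLt.trans_eq hlenC.symm) <+ B i
      have hd := hsubDB i.val i.isLt
      rw [← hCD i.val i.isLt] at hd
      exact hd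
  · refine hCeq.trans ?_
    rw [List.flatMap_def]
    congr 1
    symm
    apply List.ext_getElem
    · simp [hlenC]
    · intro n h1 h2
      simp only [List.getElem_map, List.getElem_finRange, Fin.cast_mk]
end

section
/- Lower bound of the combining lemma: with P₁ = A^{2n} s₁ YB s₂ YB … YB s_n Z^{2n} and P₂ = (ZYBA)^n t₁ ZYBA t₂ ZYBA … ZYBA t_n (ZYBA)^n, we have WLCWIS(P₁,P₂) ≥ max_{1≤i,j≤n} WLCWIS(sᵢ,tⱼ) + (4n−2)·ℓ. In particular, for any 1 ≤ i, j ≤ n and any common weakly increasing subsequence Q of sᵢ and tⱼ, the sequence Q' = A^{n+j−i} B^{i−1} Q Y^{n−i} Z^{n+i−j} is a common weakly increasing subsequence of P₁ and P₂ of total weight w(Q) + (4n−2)·ℓ. -/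
open List

/-- The sequence P₁ = A^{2n} s₁ YB s₂ YB … YB sₙ Z^{2n}. -/
def P1 {Ω : Type*} {n : ℕ} (s : Fin n → List Ω) (a b y z : Ω) : List Ω :=
  List.replicate (2*n) a ++ List.intercalate [y, b] ((List.finRange n).map s) ++
    List.replicate (2*n) z

/-- The sequence P₂ = (ZYBA)ⁿ t₁ ZYBA t₂ … ZYBA tₙ (ZYBA)ⁿ. -/
def P2 {Ω : Type*} {n : ℕ} (t : Fin n → List Ω) (a b y z : Ω) : List Ω :=
  (List.replicate n [z, y, b, a]).flatten ++
    List.intercalate [z, y, b, a] ((List.finRange n).map t) ++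
    (List.replicate n [z, y, b, a]).flatten

section Aux
variable {Ω : Type*}

lemma intercalate_single' (sep l : List Ω) : List.intercalate sep [l] = l := by
  simp [List.intercalate]

lemma intercalate_cons₂' (sep l l' : List Ω) (L : List (List Ω)) :
    List.intercalate sep (l :: l' :: L) = l ++ sep ++ List.intercalate sep (l' :: L) := by
  simp [List.intercalate, List.append_assoc]

lemma flatten_rep_sublist (sep : List Ω) :
    ∀ L : List (List Ω),
      (List.replicate L.length sep).flatten <+ sep ++ List.intercalate sep L := by
  intro L
  induction L with
  | nil => simp
  | cons l L' ih =>
    cases L' with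
    | nil => simpa [intercalate_single'] using List.sublist_append_left sep l
    | cons l' L'' =>
      rw [intercalate_cons₂']
      rw [List.length_cons, List.replicate_succ, List.flatten_cons]
      rw [List.append_assoc]
      exact (ih.trans (List.sublist_append_right l _)).append_left sep

lemma extract_sublist (sep : List Ω) :
    ∀ (L : List (List Ω)) (i : ℕ), i < L.length →
      (List.replicate i sep).flatten ++ L.getD i [] ++
        (List.replicate (L.length - 1 - i) sep).flatten <+ List.intercalate sep L := by
  intro L
  induction L with
  | nil => intro i h; simp at h
  | cons l L' ih =>
    intro i hi
    cases i with
    | zero =>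
      cases L' with
      | nil => simp [intercalate_single']
      | cons l' L'' =>
        rw [intercalate_cons₂']
        simp only [List.getD_cons_zero, List.replicate_zero, List.flatten_nil,
          List.nil_append, List.length_cons, Nat.add_sub_cancel, Nat.sub_zero]
        rw [List.append_assoc]
        exact (flatten_rep_sublist sep (l' :: L'')).append_left l
    | succ k =>
      cases L' with
      | nil => simp at hi
      | cons l' L'' =>
        rw [intercalate_cons₂']
        have hk : k < (l' :: L'').length := Nat.lt_of_succ_lt_succ (by simpa using hi)
        have H := (ih k hk).append_left sep
        have H2 := H.trans (List.sublist_append_right l (sep ++ List.intercalate sep (l' :: L'')))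
        simp only [List.getD_cons_succ, List.replicate_succ, List.flatten_cons]
        have hlen : (l :: l' :: L'').length - 1 - (k+1) = (l' :: L'').length - 1 - k := by
          simp only [List.length_cons]; omega
        rw [hlen]
        simpa only [List.append_assoc] using H2

lemma replicate_sublist_flatten (c : Ω) (blk : List Ω) (hc : c ∈ blk) :
    ∀ m, List.replicate m c <+ (List.replicate m blk).flatten := by
  intro m
  induction m with
  | zero => simp
  | succ k ih =>
    rw [List.replicate_succ, List.replicate_succ, List.flatten_cons]
    exact List.Sublist.append (List.singleton_sublist.2 hc) ih

lemma two_replicate_sublist (u v : Ω) (blk : List Ω) (hu : u ∈ blk) (hv : v ∈ blk)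
    {p q m : ℕ} (h : p + q ≤ m) :
    List.replicate p u ++ List.replicate q v <+ (List.replicate m blk).flatten := by
  have hstep : (List.replicate p blk).flatten ++ (List.replicate q blk).flatten <+
      (List.replicate m blk).flatten := by
    have hm : m = p + q + (m - p - q) := by omega
    rw [hm, List.replicate_add, List.replicate_add, List.flatten_append, List.flatten_append]
    exact List.sublist_append_left _ _
  exact ((replicate_sublist_flatten u blk hu p).append
    (replicate_sublist_flatten v blk hv q)).trans hstep

lemma sublist_map_sum_le (w : Ω → ℕ) {C A : List Ω} (h : C <+ A) :
    (C.map w).sum ≤ (A.map w).sum := by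
  induction h with
  | slnil => exact le_rfl
  | cons c h ih => simp only [List.map_cons, List.sum_cons]; omega
  | cons_cons c h ih => simp only [List.map_cons, List.sum_cons]; omega

end Aux

theorem combining_lemma_lower_bound {Ω : Type*} [LinearOrder Ω] (w : Ω → ℕ) {n : ℕ}
    (hn : 0 < n) (s t : Fin n → List Ω) (a b y z : Ω) (ℓ : ℕ)
    (hab : a < b) (hby : b < y) (hyz : y < z)
    (hs : ∀ i, ∀ x ∈ s i, b < x ∧ x < y) (ht : ∀ j, ∀ x ∈ t j, b < x ∧ x < y)
    (hwa : w a = ℓ) (hwb : w b = 2*ℓ) (hwy : w y = 2*ℓ) (hwz : w z = ℓ)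
    (hsl : ∀ i, ((s i).map w).sum ≤ ℓ) (htl : ∀ j, ((t j).map w).sum ≤ ℓ) :
    (∀ (i j : Fin n) (Q : List Ω), CWIS (s i) (t j) Q →
      CWIS (P1 s a b y z) (P2 t a b y z)
        (List.replicate (n + j.val - i.val) a ++ List.replicate i.val b ++ Q ++
          List.replicate (n - 1 - i.val) y ++ List.replicate (n + i.val - j.val) z) ∧
      ((List.replicate (n + j.val - i.val) a ++ List.replicate i.val b ++ Q ++
          List.replicate (n - 1 - i.val) y ++ List.replicate (n + i.val - j.val) z).map w).sum
        = (Q.map w).sum + (4*n - 2) * ℓ) ∧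
    Finset.univ.sup (fun ij : Fin n × Fin n => WLCWIS w (s ij.1) (t ij.2)) + (4*n - 2) * ℓ ≤
      WLCWIS w (P1 s a b y z) (P2 t a b y z) := by
  have main : ∀ (i j : Fin n) (Q : List Ω), CWIS (s i) (t j) Q →
      CWIS (P1 s a b y z) (P2 t a b y z)
        (List.replicate (n + j.val - i.val) a ++ List.replicate i.val b ++ Q ++
          List.replicate (n - 1 - i.val) y ++ List.replicate (n + i.val - j.val) z) ∧
      ((List.replicate (n + j.val - i.val) a ++ List.replicate i.val b ++ Q ++
          List.replicate (n - 1 - i.val) y ++ List.replicate (n + i.val - j.val) z).map w).sum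
        = (Q.map w).sum + (4*n - 2) * ℓ := by
    intro i j Q hQ
    have hi := i.isLt
    have hj := j.isLt
    have hQb : ∀ x ∈ Q, b < x ∧ x < y := fun x hx => hs i x (hQ.2.1.subset hx)
    constructor
    · refine ⟨?_, ?_, ?_⟩
      · -- chain
        unfold List.Chain'
        rw [List.isChain_iff_pairwise]
        refine List.pairwise_append.2 ⟨List.pairwise_append.2 ⟨List.pairwise_append.2
          ⟨List.pairwise_append.2 ⟨?_, ?_, ?_⟩, ?_, ?_⟩, ?_, ?_⟩, ?_, ?_⟩
        · exact List.pairwise_replicate.2 (Or.inr le_rfl)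
        · exact List.pairwise_replicate.2 (Or.inr le_rfl)
        · intro x hx x' hx'
          rw [List.mem_replicate] at hx hx'
          rw [hx.2, hx'.2]; exact hab.le
        · exact List.isChain_iff_pairwise.1 hQ.1
        · intro x hx q hq
          rw [List.mem_append] at hx
          rcases hx with hx | hx <;> rw [List.mem_replicate] at hx <;> rw [hx.2]
          · exact (hab.trans (hQb q hq).1).le
          · exact (hQb q hq).1.le
        · exact List.pairwise_replicate.2 (Or.inr le_rfl)
        · intro x hx x' hx'
          rw [List.mem_replicate] at hx'
          rw [hx'.2]
          simp only [List.mem_append] at hx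
          rcases hx with (hx | hx) | hq
          · rw [List.mem_replicate] at hx; rw [hx.2]; exact (hab.trans hby).le
          · rw [List.mem_replicate] at hx; rw [hx.2]; exact hby.le
          · exact (hQb x hq).2.le
        · exact List.pairwise_replicate.2 (Or.inr le_rfl)
        · intro x hx x' hx'
          rw [List.mem_replicate] at hx'
          rw [hx'.2]
          simp only [List.mem_append] at hx
          rcases hx with ((hx | hx) | hq) | hx
          · rw [List.mem_replicate] at hx; rw [hx.2]; exact (hab.trans (hby.trans hyz)).le
          · rw [List.mem_replicate] at hx; rw [hx.2]; exact (hby.trans hyz).le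
          · exact ((hQb x hq).2.trans hyz).le
          · rw [List.mem_replicate] at hx; rw [hx.2]; exact hyz.le
      · -- sublist of P1
        unfold P1
        have h1 : List.replicate (n + j.val - i.val) a <+ List.replicate (2*n) a :=
          (List.replicate_sublist_replicate a).2 (by omega)
        have h3 : List.replicate (n + i.val - j.val) z <+ List.replicate (2*n) z :=
          (List.replicate_sublist_replicate z).2 (by omega)
        have hlen : ((List.finRange n).map s).length = n := by simp
        have hget : ((List.finRange n).map s).getD i.val [] = s i := by
          rw [List.getD_eq_getElem _ _ (by rw [hlen]; exact hi)]
          simp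
        have hext := extract_sublist [y, b] ((List.finRange n).map s) i.val
          (by rw [hlen]; exact hi)
        rw [hget, hlen] at hext
        have hb : List.replicate i.val b <+ (List.replicate i.val [y, b]).flatten :=
          replicate_sublist_flatten b [y, b] (by simp) i.val
        have hy : List.replicate (n - 1 - i.val) y <+
            (List.replicate (n - 1 - i.val) [y, b]).flatten :=
          replicate_sublist_flatten y [y, b] (by simp) (n - 1 - i.val)
        have h2 : List.replicate i.val b ++ Q ++ List.replicate (n - 1 - i.val) y <+
            List.intercalate [y, b] ((List.finRange n).map s) :=
          ((hb.append hQ.2.1).append hy).trans hext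
        have := (h1.append h2).append h3
        simpa only [List.append_assoc] using this
      · -- sublist of P2
        unfold P2
        have hlen : ((List.finRange n).map t).length = n := by simp
        have hget : ((List.finRange n).map t).getD j.val [] = t j := by
          rw [List.getD_eq_getElem _ _ (by rw [hlen]; exact hj)]
          simp
        have hext := extract_sublist [z, y, b, a] ((List.finRange n).map t) j.val
          (by rw [hlen]; exact hj)
        rw [hget, hlen] at hext
        have hM : (List.replicate n [z, y, b, a]).flatten ++
            ((List.replicate j.val [z, y, b, a]).flatten ++ t j ++
              (List.replicate (n - 1 - j.val) [z, y, b, a]).flatten) ++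
            (List.replicate n [z, y, b, a]).flatten <+
            (List.replicate n [z, y, b, a]).flatten ++
              List.intercalate [z, y, b, a] ((List.finRange n).map t) ++
              (List.replicate n [z, y, b, a]).flatten :=
          ((Sublist.refl _).append hext).append (Sublist.refl _)
        refine Sublist.trans ?_ hM
        have hab' : List.replicate (n + j.val - i.val) a ++ List.replicate i.val b <+
            (List.replicate (n + j.val) [z, y, b, a]).flatten :=
          two_replicate_sublist a b [z, y, b, a] (by simp) (by simp) (by omega)
        have hyz' : List.replicate (n - 1 - i.val) y ++ List.replicate (n + i.val - j.val) z <+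
            (List.replicate (2*n - 1 - j.val) [z, y, b, a]).flatten :=
          two_replicate_sublist y z [z, y, b, a] (by simp) (by simp) (by omega)
        have := (hab'.append hQ.2.2).append hyz'
        have hsplit1 : (List.replicate (n + j.val) [z, y, b, a]).flatten =
            (List.replicate n [z, y, b, a]).flatten ++
              (List.replicate j.val [z, y, b, a]).flatten := by
          rw [← List.flatten_append, ← List.replicate_add]
        have hsplit2 : (List.replicate (2*n - 1 - j.val) [z, y, b, a]).flatten =
            (List.replicate (n - 1 - j.val) [z, y, b, a]).flatten ++
              (List.replicate n [z, y, b, a]).flatten := by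
          rw [← List.flatten_append, ← List.replicate_add]
          congr 2
          omega
        rw [hsplit1, hsplit2] at this
        simpa only [List.append_assoc] using this
    · -- weight
      simp only [List.map_append, List.sum_append, List.map_replicate, List.sum_replicate,
        smul_eq_mul, hwa, hwb, hwy, hwz]
      rw [show 4*n - 2 = (n + j.val - i.val) + i.val * 2 +
        ((n - 1 - i.val) * 2 + (n + i.val - j.val)) from by omega]
      ring
  refine ⟨main, ?_⟩
  haveI : Nonempty (Fin n × Fin n) := ⟨(⟨0, hn⟩, ⟨0, hn⟩)⟩
  obtain ⟨ij, -, hij⟩ := Finset.exists_mem_eq_sup Finset.univ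
    (Finset.univ_nonempty (α := Fin n × Fin n))
    (fun ij : Fin n × Fin n => WLCWIS w (s ij.1) (t ij.2))
  rw [hij]
  obtain ⟨i, j⟩ := ij
  have hSne : {m | ∃ C : List Ω, CWIS (s i) (t j) C ∧ (C.map w).sum = m}.Nonempty :=
    ⟨0, [], ⟨List.isChain_nil, List.nil_sublist _, List.nil_sublist _⟩, rfl⟩
  have hSbdd : BddAbove {m | ∃ C : List Ω, CWIS (s i) (t j) C ∧ (C.map w).sum = m} := by
    refine ⟨((s i).map w).sum, fun m hm => ?_⟩
    obtain ⟨C, hC, rfl⟩ := hm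
    exact sublist_map_sum_le w hC.2.1
  have hmem := Nat.sSup_mem hSne hSbdd
  obtain ⟨Q, hQ, hQsum⟩ := hmem
  obtain ⟨hcwis, hwt⟩ := main i j Q hQ
  have hTbdd : BddAbove {m | ∃ C : List Ω, CWIS (P1 s a b y z) (P2 t a b y z) C ∧
      (C.map w).sum = m} := by
    refine ⟨((P1 s a b y z).map w).sum, fun m hm => ?_⟩
    obtain ⟨C, hC, rfl⟩ := hm
    exact sublist_map_sum_le w hC.2.1
  have hTmem : WLCWIS w (s i) (t j) + (4*n - 2) * ℓ ∈
      {m | ∃ C : List Ω, CWIS (P1 s a b y z) (P2 t a b y z) C ∧ (C.map w).sum = m} := by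
    refine ⟨_, hcwis, ?_⟩
    rw [hwt, hQsum]
    rfl
  exact le_csSup hTbdd hTmem
end

section
/- Upper bound, Case 1 of the combining lemma: consider any common weakly increasing subsequence C of P₁ and P₂ such that at most one sᵢ-fragment of P₁ and at most one tⱼ-fragment of P₂ contribute symbols to C. Then the total weight of C is at most max_{1≤i,j≤n} WLCWIS(sᵢ,tⱼ) + (4n−2)·ℓ. -/
open List

/-- Filtering an intercalation whose pieces all filter to nil leaves copies of
the filtered separator. -/
private lemma filter_intercalate_aux {Ω : Type*} (p : Ω → Bool) (sep : List Ω) :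
    ∀ (L : List (List Ω)), (∀ l ∈ L, l.filter p = []) →
      (List.intercalate sep L).filter p =
        (List.replicate (L.length - 1) (sep.filter p)).flatten := by
  intro L
  induction L with
  | nil => simp [List.intercalate]
  | cons x rest ih =>
    cases rest with
    | nil =>
      intro h
      simp [List.intercalate, h x (by simp)]
    | cons y' rest' =>
      intro h
      have hx : x.filter p = [] := h x (by simp)
      have ih' := ih (fun l hl => h l (by simp [hl]))
      rw [List.intercalate] at ih' ⊢
      rw [List.intersperse_cons_cons, List.flatten_cons, List.flatten_cons,
        List.filter_append, List.filter_append, hx, ih']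
      simp [List.replicate_succ]

/-- A weakly increasing sublist of `m` copies of a strictly decreasing block
has length at most `m`. -/
private lemma chain_len_aux {Ω : Type*} [LinearOrder Ω] (blk : List Ω)
    (hblk : blk.Pairwise (fun u v => v < u)) :
    ∀ (m : ℕ) (D : List Ω), D.Chain' (· ≤ ·) →
      D.Sublist (List.replicate m blk).flatten → D.length ≤ m := by
  intro m
  induction m with
  | zero => intro D _ h; simp at h; simp [h]
  | succ k ih =>
    intro D hch hsub
    rw [List.replicate_succ, List.flatten_cons, List.sublist_append_iff] at hsub
    obtain ⟨D₁, D₂, rfl, h1, h2⟩ := hsub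
    have hD2 : D₂.length ≤ k :=
      ih D₂ (hch.sublist (List.sublist_append_right D₁ D₂)) h2
    have hpw : D₁.Pairwise (fun u v => v < u) := List.Pairwise.sublist h1 hblk
    have hch1 : D₁.Chain' (· ≤ ·) := hch.sublist (List.sublist_append_left _ _)
    have hD1 : D₁.length ≤ 1 := by
      match D₁, hpw, hch1 with
      | [], _, _ => simp
      | [u], _, _ => simp
      | u :: v :: tl, hpw, hch1 =>
        have h₁ : u ≤ v := List.rel_of_chain_cons hch1
        have h₂ : v < u := (List.pairwise_cons.mp hpw).1 v (by simp)
        exact absurd h₁ (not_le.mpr h₂)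
    simp only [List.length_append]
    omega

theorem combining_lemma_upper_bound_case1 {Ω : Type*} [LinearOrder Ω] (w : Ω → ℕ) {n : ℕ}
    (hn : 0 < n) (s t : Fin n → List Ω) (a b y z : Ω) (ℓ : ℕ)
    (hab : a < b) (hby : b < y) (hyz : y < z)
    (hs : ∀ i, ∀ x ∈ s i, b < x ∧ x < y) (ht : ∀ j, ∀ x ∈ t j, b < x ∧ x < y)
    (hwa : w a = ℓ) (hwb : w b = 2*ℓ) (hwy : w y = 2*ℓ) (hwz : w z = ℓ)
    (hsl : ∀ i, ((s i).map w).sum ≤ ℓ) (htl : ∀ j, ((t j).map w).sum ≤ ℓ)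
    (C : List Ω) (hC : CWIS (P1 s a b y z) (P2 t a b y z) C)
    -- at most one s-fragment contributes: all Σ-symbols of C come from a single s i
    (hcS : ∃ i : Fin n, (C.filter (fun x => decide (b < x ∧ x < y))).Sublist (s i))
    -- at most one t-fragment contributes
    (hcT : ∃ j : Fin n, (C.filter (fun x => decide (b < x ∧ x < y))).Sublist (t j)) :
    (C.map w).sum ≤
      Finset.univ.sup (fun ij : Fin n × Fin n => WLCWIS w (s ij.1) (t ij.2)) +
        (4*n - 2) * ℓ := by
  obtain ⟨hchain, hP1, hP2⟩ := hC
  obtain ⟨i, hi⟩ := hcS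
  obtain ⟨j, hj⟩ := hcT
  set p : Ω → Bool := fun x => decide (b < x ∧ x < y) with hp
  set q : Ω → Bool := fun x => !p x with hq
  -- basic truth values
  have hpa : p a = false := by simp only [hp, decide_eq_false_iff_not]; exact fun h => absurd h.1 (asymm hab)
  have hpb : p b = false := by simp [hp]
  have hpy : p y = false := by simp [hp]
  have hpz : p z = false := by simp only [hp, decide_eq_false_iff_not]; exact fun h => absurd h.2 (asymm hyz)
  set S : List Ω := C.filter p with hS
  set D : List Ω := C.filter q with hD
  -- split the weight of C
  have hsplit : (C.map w).sum = (S.map w).sum + (D.map w).sum := by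
    have hperm : ((S ++ D).map w).Perm (C.map w) := (List.filter_append_perm p C).map w
    rw [← hperm.sum_eq, List.map_append, List.sum_append]
  -- ===== the Σ part =====
  have hSchain : S.Chain' (· ≤ ·) := hchain.sublist (List.filter_sublist (l := C))
  have hSle : (S.map w).sum ≤
      Finset.univ.sup (fun ij : Fin n × Fin n => WLCWIS w (s ij.1) (t ij.2)) := by
    have hbdd : BddAbove {m | ∃ C' : List Ω, CWIS (s i) (t j) C' ∧ (C'.map w).sum = m} := by
      refine ⟨((s i).map w).sum, fun m hm => ?_⟩
      obtain ⟨C', hC', rfl⟩ := hm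
      exact List.Sublist.sum_le_sum (hC'.2.1.map w) (fun x _ => Nat.zero_le x)
    have hmem : (S.map w).sum ∈ {m | ∃ C' : List Ω, CWIS (s i) (t j) C' ∧ (C'.map w).sum = m} :=
      ⟨S, ⟨hSchain, hi, hj⟩, rfl⟩
    calc (S.map w).sum ≤ WLCWIS w (s i) (t j) := le_csSup hbdd hmem
      _ ≤ _ := Finset.le_sup (f := fun ij : Fin n × Fin n => WLCWIS w (s ij.1) (t ij.2))
          (Finset.mem_univ (i, j))
  -- ===== the block part D =====
  have hDchain : D.Chain' (· ≤ ·) := hchain.sublist (List.filter_sublist (l := C))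
  -- D is a sublist of (3n-1) copies of the block [z,y,b,a]
  have hqblk : List.filter q [z, y, b, a] = [z, y, b, a] := by
    simp [hq, hpa, hpb, hpy, hpz]
  have hqt : ∀ l ∈ (List.finRange n).map t, l.filter q = [] := by
    intro l hl
    rw [List.mem_map] at hl
    obtain ⟨j', _, rfl⟩ := hl
    rw [List.filter_eq_nil_iff]
    intro x hx
    simp [hq, hp, ht j' x hx]
  have hDsub : D.Sublist (List.replicate (n + ((n - 1) + n)) [z, y, b, a]).flatten := by
    have h0 : D.Sublist ((P2 t a b y z).filter q) := hP2.filter q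
    have h1 : (P2 t a b y z).filter q =
        (List.replicate n [z, y, b, a]).flatten ++
          ((List.replicate (n - 1) [z, y, b, a]).flatten ++
            (List.replicate n [z, y, b, a]).flatten) := by
      rw [P2, List.filter_append, List.filter_append,
        filter_intercalate_aux q [z, y, b, a] _ hqt, hqblk,
        List.filter_flatten, List.map_replicate, hqblk, List.length_map,
        List.length_finRange, List.append_assoc]
    rw [List.replicate_add, List.replicate_add, List.flatten_append, List.flatten_append]
    rw [h1] at h0
    exact h0
  have hblkpw : ([z, y, b, a] : List Ω).Pairwise (fun u v => v < u) := by
    have h1 : b < z := hby.trans hyz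
    have h2 : a < z := hab.trans (hby.trans hyz)
    have h3 : a < y := hab.trans hby
    simp [List.pairwise_cons, hyz, hby, hab, h1, h2, h3]
  have hDlen : D.length ≤ n + ((n - 1) + n) :=
    chain_len_aux [z, y, b, a] hblkpw _ D hDchain hDsub
  -- split D into the {b,y} part E and the {a,z} part F
  set pby : Ω → Bool := fun x => decide (x = b ∨ x = y) with hpby
  set E : List Ω := D.filter pby with hE
  set F : List Ω := D.filter (fun x => !pby x) with hF
  have hDsplit : (D.map w).sum = (E.map w).sum + (F.map w).sum := by
    have hperm : ((E ++ F).map w).Perm (D.map w) := (List.filter_append_perm pby D).map w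
    rw [← hperm.sum_eq, List.map_append, List.sum_append]
  have hDlensplit : D.length = E.length + F.length := by
    have := (List.filter_append_perm pby D).length_eq
    simpa using this.symm
  -- E is a sublist of (n-1) copies of [y,b]
  have hEsubP1 : E.Sublist (P1 s a b y z) :=
    ((List.filter_sublist (l := D)).trans (List.filter_sublist (l := C))).trans hP1
  have hEfix : E.filter pby = E := by
    rw [List.filter_eq_self]
    intro x hx
    exact (List.mem_filter.mp hx).2
  have hpbys : ∀ l ∈ (List.finRange n).map s, l.filter pby = [] := by
    intro l hl
    rw [List.mem_map] at hl
    obtain ⟨i', _, rfl⟩ := hl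
    rw [List.filter_eq_nil_iff]
    intro x hx
    have hx' := hs i' x hx
    simp only [hpby, decide_eq_true_eq]
    push_neg
    exact ⟨hx'.1.ne', hx'.2.ne⟩
  have hpbya : pby a = false := by
    simp only [hpby, decide_eq_false_iff_not]
    push_neg
    exact ⟨hab.ne, (hab.trans hby).ne⟩
  have hpbyz : pby z = false := by
    simp only [hpby, decide_eq_false_iff_not]
    push_neg
    exact ⟨(hby.trans hyz).ne', hyz.ne'⟩
  have hpbyyb : List.filter pby [y, b] = [y, b] := by simp [hpby]
  have hP1f : (P1 s a b y z).filter pby = (List.replicate (n - 1) [y, b]).flatten := by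
    rw [P1, List.filter_append, List.filter_append,
      filter_intercalate_aux pby [y, b] _ hpbys, hpbyyb,
      List.filter_replicate, List.filter_replicate, hpbya, hpbyz,
      List.length_map, List.length_finRange]
    simp
  have hEsub : E.Sublist (List.replicate (n - 1) [y, b]).flatten := by
    have := hEsubP1.filter pby
    rwa [hEfix, hP1f] at this
  have hEchain : E.Chain' (· ≤ ·) := hDchain.sublist (List.filter_sublist (l := D))
  have hybpw : ([y, b] : List Ω).Pairwise (fun u v => v < u) := by
    simp [hby]
  have hElen : E.length ≤ n - 1 := chain_len_aux [y, b] hybpw _ E hEchain hEsub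
  -- weights of elements of E and F
  have hEw : (E.map w).sum ≤ E.length * (2 * ℓ) := by
    have : ∀ x ∈ E.map w, x ≤ 2 * ℓ := by
      intro x hx
      rw [List.mem_map] at hx
      obtain ⟨u, hu, rfl⟩ := hx
      have : pby u = true := (List.mem_filter.mp hu).2
      simp only [hpby, decide_eq_true_eq] at this
      rcases this with rfl | rfl
      · rw [hwb]
      · rw [hwy]
    have h := List.sum_le_card_nsmul (E.map w) (2 * ℓ) this
    simpa [smul_eq_mul] using h
  have hFw : (F.map w).sum ≤ F.length * ℓ := by
    -- every element of F is a or z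
    set r2 : Ω → Bool := fun x => q x && !pby x with hr2
    have hFfix : F.filter r2 = F := by
      rw [List.filter_eq_self]
      intro x hx
      have h1 := (List.mem_filter.mp hx).2
      have h2 := (List.mem_filter.mp (List.mem_filter.mp hx).1).2
      simp [hr2, h1, h2]
    have hFsubP1 : F.Sublist (P1 s a b y z) :=
      ((List.filter_sublist (l := D)).trans (List.filter_sublist (l := C))).trans hP1
    have hr2s : ∀ l ∈ (List.finRange n).map s, l.filter r2 = [] := by
      intro l hl
      rw [List.mem_map] at hl
      obtain ⟨i', _, rfl⟩ := hl
      rw [List.filter_eq_nil_iff]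
      intro x hx
      simp [hr2, hq, hp, hs i' x hx]
    have hr2yb : List.filter r2 [y, b] = [] := by
      simp [hr2, hq, hpy, hpb, hpby]
    have hr2a : r2 a = true := by simp [hr2, hq, hpa, hpbya]
    have hr2z : r2 z = true := by simp [hr2, hq, hpz, hpbyz]
    have hP1f2 : (P1 s a b y z).filter r2 =
        List.replicate (2*n) a ++ ((List.replicate (n - 1) ([] : List Ω)).flatten
          ++ List.replicate (2*n) z) := by
      rw [P1, List.filter_append, List.filter_append,
        filter_intercalate_aux r2 [y, b] _ hr2s, hr2yb,
        List.filter_replicate, List.filter_replicate, hr2a, hr2z,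
        List.length_map, List.length_finRange, List.append_assoc]
      simp
    have hFsub : F.Sublist (List.replicate (2*n) a ++
        ((List.replicate (n - 1) ([] : List Ω)).flatten ++ List.replicate (2*n) z)) := by
      have := hFsubP1.filter r2
      rwa [hFfix, hP1f2] at this
    have hmemF : ∀ x ∈ F.map w, x ≤ ℓ := by
      intro x hx
      rw [List.mem_map] at hx
      obtain ⟨u, hu, rfl⟩ := hx
      have hu' := hFsub.subset hu
      simp only [List.mem_append, List.mem_replicate] at hu'
      have : u = a ∨ u = z := by
        rcases hu' with h | h | h
        · exact Or.inl h.2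
        · exfalso
          rw [List.mem_flatten] at h
          obtain ⟨l, hl, hul⟩ := h
          rw [List.mem_replicate] at hl
          rw [hl.2] at hul
          simp at hul
        · exact Or.inr h.2
      rcases this with rfl | rfl
      · rw [hwa]
      · rw [hwz]
    have h := List.sum_le_card_nsmul (F.map w) ℓ hmemF
    simpa [smul_eq_mul] using h
  -- final arithmetic
  have hkey : E.length * (2 * ℓ) + F.length * ℓ ≤ (4 * n - 2) * ℓ := by
    have h1 : 2 * E.length + F.length ≤ 4 * n - 2 := by omega
    calc E.length * (2 * ℓ) + F.length * ℓ = (2 * E.length + F.length) * ℓ := by ring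
      _ ≤ (4 * n - 2) * ℓ := Nat.mul_le_mul_right ℓ h1
  omega
end

section
/- In a weakly increasing common subsequence of P₁ and P₂, if two distinct sᵢ-fragments of P₁ (with i < i') both contribute at least one symbol, then none of the YB-fragments of P₁ lying between them contributes any symbol. Consequently, if c_S fragments among s₁,…,s_n contribute, then c_B + c_Y ≤ n − 1 − (c_S − 1), where c_B and c_Y count occurrences of B and Y in the subsequence. -/
open List

theorem yb_fragments_between_contributing_fragments {Ω : Type*} [LinearOrder Ω] {n : ℕ}
    (hn : 0 < n) (s : Fin n → List Ω) (a b y z : Ω)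
    (hab : a < b) (hby : b < y) (hyz : y < z)
    (hs : ∀ i, ∀ x ∈ s i, b < x ∧ x < y)
    (C CA CZ : List Ω) (D E : Fin n → List Ω)
    (hchain : C.Chain' (· ≤ ·))
    -- a decomposition of C witnessing how it embeds into
    -- P₁ = a^{2n} s₁ yb s₂ yb … yb sₙ z^{2n}; E i is the contribution of the
    -- yb-fragment preceding sᵢ (so E 0 = [], there being n−1 yb-fragments)
    (hdec : C = CA ++ ((List.finRange n).flatMap fun i => E i ++ D i) ++ CZ)
    (hCA : CA.Sublist (List.replicate (2*n) a)) (hCZ : CZ.Sublist (List.replicate (2*n) z))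
    (hD : ∀ i, (D i).Sublist (s i)) (hE : ∀ i, (E i).Sublist [y, b])
    (hE0 : ∀ i : Fin n, i.val = 0 → E i = []) :
    (∀ i i' : Fin n, i < i' → D i ≠ [] → D i' ≠ [] →
      ∀ k : Fin n, i < k → k ≤ i' → E k = []) ∧
    C.count b + C.count y ≤
      n - 1 - ((Finset.univ.filter fun i : Fin n => D i ≠ []).card - 1) := by
  classical
  have hpw : C.Pairwise (· ≤ ·) := List.isChain_iff_pairwise.mp hchain
  rw [hdec] at hpw
  have hpwF : ((List.finRange n).flatMap fun i => E i ++ D i).Pairwise (· ≤ ·) :=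
    ((List.pairwise_append.mp (List.pairwise_append.mp hpw).1)).2.1
  rw [List.flatMap_def, List.pairwise_flatten] at hpwF
  obtain ⟨hin, hbet⟩ := hpwF
  have keyin : ∀ i : Fin n, (E i ++ D i).Pairwise (· ≤ ·) := fun i =>
    hin _ (List.mem_map_of_mem (List.mem_finRange i))
  rw [List.pairwise_map] at hbet
  have key : ∀ i j : Fin n, i < j → ∀ u ∈ E i ++ D i, ∀ v ∈ E j ++ D j, u ≤ v := by
    intro i j hij
    have := List.pairwise_iff_getElem.mp hbet i j (by simp) (by simp) (by simpa using hij)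
    simpa using this
  -- Part 1
  have part1 : ∀ i i' : Fin n, i < i' → D i ≠ [] → D i' ≠ [] →
      ∀ k : Fin n, i < k → k ≤ i' → E k = [] := by
    intro i i' hii hDi hDi' k hik hki'
    by_contra hEk
    obtain ⟨x, hx⟩ := List.exists_mem_of_ne_nil _ hEk
    obtain ⟨u, hu⟩ := List.exists_mem_of_ne_nil _ hDi
    obtain ⟨v, hv⟩ := List.exists_mem_of_ne_nil _ hDi'
    have hux : u ≤ x :=
      key i k hik u (List.mem_append_right _ hu) x (List.mem_append_left _ hx)
    have hxv : x ≤ v := by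
      rcases lt_or_eq_of_le hki' with h | h
      · exact key k i' h x (List.mem_append_left _ hx) v (List.mem_append_right _ hv)
      · subst h
        exact (List.pairwise_append.mp (keyin k)).2.2 x hx v hv
    have hbu := (hs i u ((hD i).subset hu)).1
    have hvy := (hs i' v ((hD i').subset hv)).2
    have hxyb : x = y ∨ x = b := by
      have := (hE k).subset hx
      simpa using this
    rcases hxyb with rfl | rfl
    · exact absurd hxv (not_le.mpr hvy)
    · exact absurd hux (not_le.mpr hbu)
  refine ⟨part1, ?_⟩
  -- Part 2: counting
  have hbCA : CA.count b = 0 := by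
    rw [List.count_eq_zero]
    intro h
    have := hCA.subset h
    rw [List.mem_replicate] at this
    exact absurd this.2.symm hab.ne
  have hyCA : CA.count y = 0 := by
    rw [List.count_eq_zero]
    intro h
    have := hCA.subset h
    rw [List.mem_replicate] at this
    exact absurd this.2.symm (hab.trans hby).ne
  have hbCZ : CZ.count b = 0 := by
    rw [List.count_eq_zero]
    intro h
    have := hCZ.subset h
    rw [List.mem_replicate] at this
    exact absurd this.2 (hby.trans hyz).ne
  have hyCZ : CZ.count y = 0 := by
    rw [List.count_eq_zero]
    intro h
    have := hCZ.subset h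
    rw [List.mem_replicate] at this
    exact absurd this.2 hyz.ne
  have hbD : ∀ i, (D i).count b = 0 := by
    intro i
    rw [List.count_eq_zero]
    intro h
    exact absurd (hs i b ((hD i).subset h)).1 (lt_irrefl b)
  have hyD : ∀ i, (D i).count y = 0 := by
    intro i
    rw [List.count_eq_zero]
    intro h
    exact absurd (hs i y ((hD i).subset h)).2 (lt_irrefl y)
  -- E i is [], [y], or [b]
  have hEcases : ∀ i : Fin n, E i = [] ∨ E i = [y] ∨ E i = [b] := by
    intro i
    have h := hE i
    rcases List.sublist_cons_iff.mp h with h1 | ⟨r, hr, hr'⟩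
    · rcases List.sublist_cons_iff.mp h1 with h2 | ⟨r, hr, hr'⟩
      · exact Or.inl (List.sublist_nil.mp h2)
      · rw [List.sublist_nil.mp hr'] at hr
        exact Or.inr (Or.inr hr)
    · rcases List.sublist_cons_iff.mp hr' with h2 | ⟨r', hr2, hr2'⟩
      · rw [List.sublist_nil.mp h2] at hr
        exact Or.inr (Or.inl hr)
      · exfalso
        rw [List.sublist_nil.mp hr2'] at hr2
        rw [hr2] at hr
        have hpEi : (E i).Pairwise (· ≤ ·) :=
          (keyin i).sublist (List.sublist_append_left _ _)
        rw [hr] at hpEi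
        have : y ≤ b := (List.pairwise_cons.mp hpEi).1 b (by simp)
        exact absurd this (not_le.mpr hby)
  have hEcount : ∀ i : Fin n, (E i).count b + (E i).count y =
      if E i = [] then 0 else 1 := by
    intro i
    rcases hEcases i with h | h | h <;> rw [h] <;>
      simp [List.count_cons, List.count_nil, hby.ne, hby.ne']
  -- total count
  set T : Finset (Fin n) := Finset.univ.filter (fun i => E i ≠ []) with hT
  set S : Finset (Fin n) := Finset.univ.filter (fun i => D i ≠ []) with hS
  have hcount : C.count b + C.count y = T.card := by
    rw [hdec]
    simp only [List.count_append, hbCA, hyCA, hbCZ, hyCZ, List.flatMap_def,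
      List.count_flatten, List.map_map]
    have hmap : ∀ (c : Ω), ((List.finRange n).map ((fun l => List.count c l) ∘
        fun i => E i ++ D i)).sum = ∑ i : Fin n, ((E i ++ D i).count c) := by
      intro c
      rw [Fin.sum_univ_def]
      rfl
    rw [hmap b, hmap y]
    have : ∑ i : Fin n, ((E i ++ D i).count b) + ∑ i : Fin n, ((E i ++ D i).count y)
        = ∑ i : Fin n, (if E i = [] then 0 else 1) := by
      rw [← Finset.sum_add_distrib]
      refine Finset.sum_congr rfl fun i _ => ?_
      simp only [List.count_append, hbD i, hyD i, Nat.add_zero]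
      exact hEcount i
    simp only [Nat.zero_add, Nat.add_zero]
    rw [this, hT, Finset.card_filter]
    refine Finset.sum_congr rfl fun i _ => ?_
    by_cases h : E i = [] <;> simp [h]
  rw [hcount]
  -- final combinatorics
  have h0T : (⟨0, hn⟩ : Fin n) ∉ T := by
    simp only [hT, Finset.mem_filter, Finset.mem_univ, true_and, not_not]
    exact hE0 _ rfl
  by_cases hSc : S.card ≤ 1
  · have h1 : S.card - 1 = 0 := by omega
    rw [h1, Nat.sub_zero]
    have : T ⊆ Finset.univ.erase ⟨0, hn⟩ :=
      fun x hx => Finset.mem_erase.mpr ⟨fun h => h0T (h ▸ hx), Finset.mem_univ x⟩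
    calc T.card ≤ (Finset.univ.erase (⟨0, hn⟩ : Fin n)).card := Finset.card_le_card this
      _ = n - 1 := by rw [Finset.card_erase_of_mem (Finset.mem_univ _)]; simp
  · push_neg at hSc
    have hSne : S.Nonempty := Finset.card_pos.mp (by omega)
    set m := S.min' hSne with hm
    set M := S.max' hSne with hM
    have hmS : m ∈ S := S.min'_mem hSne
    have hMS : M ∈ S := S.max'_mem hSne
    have hmM : m < M := by
      rcases lt_or_eq_of_le (S.min'_le M hMS) with h | h
      · exact h
      · exfalso
        have hsub : S ⊆ {m} := fun x hx => Finset.mem_singleton.mpr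
          (le_antisymm (le_of_le_of_eq (S.le_max' x hx) h.symm) (S.min'_le x hx))
        have := Finset.card_le_card hsub
        simp at this
        omega
    have hDm : D m ≠ [] := (Finset.mem_filter.mp hmS).2
    have hDM : D M ≠ [] := (Finset.mem_filter.mp hMS).2
    have hTdisj : ∀ k ∈ Finset.Ioc m M, k ∉ T := by
      intro k hk
      rw [Finset.mem_Ioc] at hk
      simp only [hT, Finset.mem_filter, Finset.mem_univ, true_and, not_not]
      exact part1 m M hmM hDm hDM k hk.1 hk.2
    have h0K : (⟨0, hn⟩ : Fin n) ∉ Finset.Ioc m M := by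
      rw [Finset.mem_Ioc]
      intro h
      exact absurd h.1 (by simp [Fin.lt_def])
    have hTsub : T ⊆ Finset.univ \ insert (⟨0, hn⟩ : Fin n) (Finset.Ioc m M) := by
      intro x hx
      rw [Finset.mem_sdiff, Finset.mem_insert]
      refine ⟨Finset.mem_univ x, ?_⟩
      rintro (rfl | h)
      · exact h0T hx
      · exact hTdisj x h hx
    have hcard1 : T.card ≤ n - 1 - (M.val - m.val) := by
      calc T.card ≤ (Finset.univ \ insert (⟨0, hn⟩ : Fin n) (Finset.Ioc m M)).card :=
            Finset.card_le_card hTsub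
        _ = n - ((Finset.Ioc m M).card + 1) := by
            rw [Finset.card_sdiff_of_subset (Finset.subset_univ _), Finset.card_insert_of_notMem h0K]
            simp
        _ = n - 1 - (M.val - m.val) := by rw [Fin.card_Ioc]; omega
    have hScard : S.card ≤ M.val - m.val + 1 := by
      have : S ⊆ Finset.Icc m M := fun x hx =>
        Finset.mem_Icc.mpr ⟨S.min'_le x hx, S.le_max' x hx⟩
      have := Finset.card_le_card this
      rw [Fin.card_Icc] at this
      omega
    omega
end

section
/- If C is a weakly increasing common subsequence of P₁ and P₂ in which c_S of the sᵢ-fragments and c_T of the tⱼ-fragments contribute at least one symbol each, then the total weight contributed by symbols of Σ (i.e., symbols from the sᵢ/tⱼ-fragments) is at most min(c_S, c_T)·ℓ. -/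
open List

lemma aux_flatMap_sum_le {Ω : Type*} [DecidableEq Ω] (w : Ω → ℕ) {n ℓ : ℕ} (s D : Fin n → List Ω)
    (hDs : ∀ i, (D i).Sublist (s i)) (hsl : ∀ i, ((s i).map w).sum ≤ ℓ) :
    ((((List.finRange n).flatMap D).map w).sum) ≤
      (Finset.univ.filter fun i : Fin n => D i ≠ []).card * ℓ := by
  have h1 : (((List.finRange n).flatMap D).map w).sum
      = ∑ i : Fin n, ((D i).map w).sum := by
    rw [Fin.sum_univ_def, List.map_flatMap, List.flatMap_def, List.sum_flatten, List.map_map]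
    rfl
  rw [h1]
  rw [← Finset.sum_filter_add_sum_filter_not Finset.univ (fun i => D i ≠ [])]
  have h2 : ∑ i ∈ Finset.univ.filter (fun i : Fin n => ¬ D i ≠ []), ((D i).map w).sum = 0 := by
    apply Finset.sum_eq_zero
    intro i hi
    simp only [Finset.mem_filter, not_not] at hi
    rw [hi.2]; rfl
  rw [h2, add_zero]
  calc ∑ i ∈ Finset.univ.filter (fun i : Fin n => D i ≠ []), ((D i).map w).sum
      ≤ ∑ _i ∈ Finset.univ.filter (fun i : Fin n => D i ≠ []), ℓ := by
        apply Finset.sum_le_sum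
        intro i _
        exact le_trans (List.Sublist.sum_le_sum ((hDs i).map w) (fun _ _ => Nat.zero_le _)) (hsl i)
    _ = (Finset.univ.filter fun i : Fin n => D i ≠ []).card * ℓ := by
        rw [Finset.sum_const, smul_eq_mul]

theorem sigma_contribution_le_min {Ω : Type*} [LinearOrder Ω] (w : Ω → ℕ) {n : ℕ}
    (s t : Fin n → List Ω) (a b y z : Ω) (ℓ : ℕ)
    (hab : a < b) (hby : b < y) (hyz : y < z)
    (hs : ∀ i, ∀ x ∈ s i, b < x ∧ x < y) (ht : ∀ j, ∀ x ∈ t j, b < x ∧ x < y)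
    (hsl : ∀ i, ((s i).map w).sum ≤ ℓ) (htl : ∀ j, ((t j).map w).sum ≤ ℓ)
    (C : List Ω) (hC : CWIS (P1 s a b y z) (P2 t a b y z) C)
    (D D' : Fin n → List Ω)
    -- the Σ-symbols of C, matched inside the s-fragments in a non-crossing fashion
    (hD : C.filter (fun x => decide (b < x ∧ x < y)) = (List.finRange n).flatMap D)
    (hDs : ∀ i, (D i).Sublist (s i))
    -- and matched inside the t-fragments in a non-crossing fashion
    (hD' : C.filter (fun x => decide (b < x ∧ x < y)) = (List.finRange n).flatMap D')
    (hD't : ∀ j, (D' j).Sublist (t j)) :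
    (((C.filter (fun x => decide (b < x ∧ x < y))).map w).sum) ≤
      min ((Finset.univ.filter fun i : Fin n => D i ≠ []).card)
          ((Finset.univ.filter fun j : Fin n => D' j ≠ []).card) * ℓ := by
  rw [min_mul_of_nonneg _ _ (Nat.zero_le ℓ)]
  apply le_min
  · rw [hD]; exact aux_flatMap_sum_le w s D hDs hsl
  · rw [hD']; exact aux_flatMap_sum_le w t D' hD't htl
end

section
/- AND gadget for LCWIS: let A₁, B₁ be sequences over alphabet Σ₁ and A₂, B₂ over a disjoint alphabet Σ₂, with every symbol of Σ₁ smaller than every symbol of Σ₂ in the combined linear order. Then LCWIS(A₁A₂, B₁B₂) = LCWIS(A₁,B₁) + LCWIS(A₂,B₂), where A₁A₂ denotes concatenation. -/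
open List

lemma lcwis_bdd {σ : Type*} [LinearOrder σ] (A B : List σ) :
    BddAbove {n | ∃ C : List σ, CWIS A B C ∧ C.length = n} :=
  ⟨A.length, fun n ⟨C, hC, hl⟩ => hl ▸ hC.2.1.length_le⟩

lemma lcwis_ne {σ : Type*} [LinearOrder σ] (A B : List σ) :
    {n | ∃ C : List σ, CWIS A B C ∧ C.length = n}.Nonempty :=
  ⟨0, [], ⟨List.isChain_nil, nil_sublist _, nil_sublist _⟩, rfl⟩

lemma exists_lcwis {σ : Type*} [LinearOrder σ] (A B : List σ) :
    ∃ C : List σ, CWIS A B C ∧ C.length = LCWIS A B :=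
  Nat.sSup_mem (lcwis_ne A B) (lcwis_bdd A B)

lemma le_lcwis {σ : Type*} [LinearOrder σ] {A B C : List σ} (h : CWIS A B C) :
    C.length ≤ LCWIS A B :=
  le_csSup (lcwis_bdd A B) ⟨C, h, rfl⟩

lemma split_unique {α : Type*} (P : α → Prop) :
    ∀ (l1 : List α) {l2 l3 l4 : List α}, l1 ++ l2 = l3 ++ l4 →
      (∀ x ∈ l1, P x) → (∀ x ∈ l3, P x) → (∀ x ∈ l2, ¬P x) → (∀ x ∈ l4, ¬P x) →
      l1 = l3 ∧ l2 = l4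
  | [], l2, l3, l4, h, _, h3, h2, _ => by
      cases l3 with
      | nil => simpa using h
      | cons c t =>
          simp only [nil_append] at h
          subst h
          exact absurd (h3 c (by simp)) (h2 c (by simp))
  | a :: l1, l2, l3, l4, h, h1, h3, h2, h4 => by
      cases l3 with
      | nil =>
          simp only [nil_append] at h
          subst h
          exact absurd (h1 a (by simp)) (h4 a (by simp))
      | cons c t =>
          simp only [cons_append, cons.injEq] at h
          obtain ⟨rfl, h⟩ := h
          obtain ⟨he, he2⟩ := split_unique P l1 h (fun x hx => h1 x (by simp [hx]))
            (fun x hx => h3 x (by simp [hx])) h2 h4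
          exact ⟨by rw [he], he2⟩

theorem and_gadget_lcwis {σ₁ σ₂ : Type*} [LinearOrder σ₁] [LinearOrder σ₂]
    (A₁ B₁ : List σ₁) (A₂ B₂ : List σ₂) :
    LCWIS ((A₁.map fun x => (toLex (Sum.inl x) : σ₁ ⊕ₗ σ₂)) ++
             (A₂.map fun x => (toLex (Sum.inr x) : σ₁ ⊕ₗ σ₂)))
          ((B₁.map fun x => (toLex (Sum.inl x) : σ₁ ⊕ₗ σ₂)) ++
             (B₂.map fun x => (toLex (Sum.inr x) : σ₁ ⊕ₗ σ₂))) =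
      LCWIS A₁ B₁ + LCWIS A₂ B₂ := by
  set f : σ₁ → σ₁ ⊕ₗ σ₂ := fun x => toLex (Sum.inl x) with hf
  set g : σ₂ → σ₁ ⊕ₗ σ₂ := fun x => toLex (Sum.inr x) with hg
  have hfinj : Function.Injective f := fun a b h => by
    simpa [hf, Sum.inl.injEq] using toLex.injective h
  have hginj : Function.Injective g := fun a b h => by
    simpa [hg, Sum.inr.injEq] using toLex.injective h
  apply _root_.le_antisymm
  · apply csSup_le (lcwis_ne _ _)
    rintro n ⟨C, ⟨hch, hA, hB⟩, rfl⟩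
    rw [List.sublist_append_iff] at hA hB
    obtain ⟨Ca1, Ca2, hCa, hCa1, hCa2⟩ := hA
    obtain ⟨Cb1, Cb2, hCb, hCb1, hCb2⟩ := hB
    rw [List.sublist_map_iff] at hCa1 hCa2 hCb1 hCb2
    obtain ⟨D₁, hD₁s, rfl⟩ := hCa1
    obtain ⟨D₂, hD₂s, rfl⟩ := hCa2
    obtain ⟨E₁, hE₁s, rfl⟩ := hCb1
    obtain ⟨E₂, hE₂s, rfl⟩ := hCb2
    have key := split_unique (fun x : σ₁ ⊕ₗ σ₂ => (ofLex x).isLeft) (D₁.map f)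
      (hCa.symm.trans hCb)
      (by rintro x hx; simp only [mem_map] at hx; obtain ⟨a, _, rfl⟩ := hx; rfl)
      (by rintro x hx; simp only [mem_map] at hx; obtain ⟨a, _, rfl⟩ := hx; rfl)
      (by rintro x hx; simp only [mem_map] at hx; obtain ⟨a, _, rfl⟩ := hx; simp [hg])
      (by rintro x hx; simp only [mem_map] at hx; obtain ⟨a, _, rfl⟩ := hx; simp [hg])
    obtain ⟨h1, h2⟩ := key
    have hD₁E₁ : D₁ = E₁ := List.map_injective_iff.2 hfinj h1
    have hD₂E₂ : D₂ = E₂ := List.map_injective_iff.2 hginj h2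
    rw [hCa] at hch; unfold List.Chain' at hch; rw [List.isChain_append] at hch
    obtain ⟨hc1, hc2, _⟩ := hch
    rw [List.isChain_map] at hc1 hc2
    have hc1' : D₁.Chain' (· ≤ ·) := hc1.imp fun a b h => by
      simpa [hf, Sum.Lex.inl_le_inl_iff] using h
    have hc2' : D₂.Chain' (· ≤ ·) := hc2.imp fun a b h => by
      simpa [hg, Sum.Lex.inr_le_inr_iff] using h
    have l1 : D₁.length ≤ LCWIS A₁ B₁ := le_lcwis ⟨hc1', hD₁s, hD₁E₁ ▸ hE₁s⟩
    have l2 : D₂.length ≤ LCWIS A₂ B₂ := le_lcwis ⟨hc2', hD₂s, hD₂E₂ ▸ hE₂s⟩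
    rw [hCa]
    calc ((D₁.map f) ++ (D₂.map g)).length = D₁.length + D₂.length := by simp
    _ ≤ LCWIS A₁ B₁ + LCWIS A₂ B₂ := Nat.add_le_add l1 l2
  · obtain ⟨C₁, hC₁, hl₁⟩ := exists_lcwis A₁ B₁
    obtain ⟨C₂, hC₂, hl₂⟩ := exists_lcwis A₂ B₂
    have hsub : CWIS ((A₁.map f) ++ (A₂.map g)) ((B₁.map f) ++ (B₂.map g)) ((C₁.map f) ++ (C₂.map g)) := by
      refine ⟨?_, (hC₁.2.1.map f).append (hC₂.2.1.map g),
        (hC₁.2.2.map f).append (hC₂.2.2.map g)⟩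
      unfold List.Chain'; rw [List.isChain_append]
      refine ⟨?_, ?_, ?_⟩
      · rw [List.isChain_map]; exact hC₁.1.imp fun a b h => Sum.Lex.inl_le_inl_iff.2 h
      · rw [List.isChain_map]; exact hC₂.1.imp fun a b h => Sum.Lex.inr_le_inr_iff.2 h
      · intro x hx y hy
        have hx' := mem_of_mem_getLast? hx
        have hy' := mem_of_mem_head? hy
        simp only [mem_map] at hx' hy'
        obtain ⟨a, _, rfl⟩ := hx'
        obtain ⟨b, _, rfl⟩ := hy'
        exact Sum.Lex.inl_le_inr a b
    have := le_lcwis hsub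
    simpa [hl₁, hl₂] using this
end
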